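/- arXiv:1602.05768 — 3 statements merged into one kernel-verified Lean document; each statement's English description precedes it below -/
import Mathlib

section
/- Let G be a connected r-regular graph, k ≥ 1 an integer, v ∈ V, C ⊆ V, and t ≥ 0. Then the probability, in the COBRA process on G with branching factor k started from C_0 = C, that the hitting time Hit_C(v) exceeds t, is equal to the probability, in the BIPS process on G with source v and parameter k, that C ∩ A_t = ∅: Pr(Hit_C(v) > t | C_0 = C) = Pr(C ∩ A_t = ∅ | A_0 = {v}). -/
open Finset

noncomputable section

variable {V : Type*}

/-- The random-walk transition matrix `P = A(G)/r` of a graph `G`. -/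
def transMatrix [Fintype V] (G : SimpleGraph V) [DecidableRel G.Adj] (r : ℕ) :
    Matrix V V ℝ :=
  Matrix.of fun x y => if G.Adj x y then (r : ℝ)⁻¹ else 0

/-- `λ = max_{i ≥ 2} |λ_i|`: the largest absolute value of an eigenvalue of the
transition matrix on the space orthogonal to the constant vectors.  For a connected
regular graph this is exactly the second largest eigenvalue in absolute value. -/
def secondEigen [Fintype V] (G : SimpleGraph V) [DecidableRel G.Adj] (r : ℕ) : ℝ :=
  sSup {y : ℝ | ∃ (μ : ℝ) (f : V → ℝ), y = |μ| ∧ f ≠ 0 ∧ (∑ x, f x) = 0 ∧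
    (transMatrix G r).mulVec f = μ • f}

/-- `d_A(x) = |N(x) ∩ A|`. -/
def degIn [Fintype V] [DecidableEq V] (G : SimpleGraph V) [DecidableRel G.Adj]
    (A : Finset V) (x : V) : ℕ :=
  (G.neighborFinset x ∩ A).card

/-- Probability that a vertex `u` choosing `k` uniform random neighbours (with
replacement) in an `r`-regular graph hits the set `A` at least once. -/
def pInf [Fintype V] [DecidableEq V] (G : SimpleGraph V) [DecidableRel G.Adj]
    (r k : ℕ) (A : Finset V) (u : V) : ℝ :=
  1 - (1 - (degIn G A u : ℝ) / (r : ℝ)) ^ k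

/-- One-step transition probability of the BIPS process with source `v` and parameter `k`:
each `u ≠ v` is independently infected with probability `pInf`, and `v` is always infected. -/
def bipsStep [Fintype V] [DecidableEq V] (G : SimpleGraph V) [DecidableRel G.Adj]
    (r k : ℕ) (v : V) (A B : Finset V) : ℝ :=
  if v ∈ B then
    ∏ u ∈ Finset.univ.erase v, (if u ∈ B then pInf G r k A u else 1 - pInf G r k A u)
  else 0

/-- Marginal distribution at time `t` of the Markov chain with one-step transition
probabilities `step` started at `A₀`. -/
def chainProb [Fintype V] [DecidableEq V] (step : Finset V → Finset V → ℝ)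
    (A₀ : Finset V) : ℕ → Finset V → ℝ
  | 0, B => if B = A₀ then 1 else 0
  | (t+1), B => ∑ A : Finset V, chainProb step A₀ t A * step A B

/-- Probability of the trajectory `ω 0, ω 1, …, ω T` for the Markov chain with one-step
transition probabilities `step` started at `A₀`. -/
def trajProb [DecidableEq V] (step : Finset V → Finset V → ℝ) (A₀ : Finset V) (T : ℕ)
    (ω : Fin (T+1) → Finset V) : ℝ :=
  (if ω 0 = A₀ then (1:ℝ) else 0) * ∏ i : Fin T, step (ω i.castSucc) (ω i.succ)

open scoped Classical in
/-- Probability that the trajectory `(A_0, …, A_T)` of the chain satisfies `Q`. -/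
def trajPr [Fintype V] [DecidableEq V] (step : Finset V → Finset V → ℝ)
    (A₀ : Finset V) (T : ℕ) (Q : (Fin (T+1) → Finset V) → Prop) : ℝ :=
  ∑ ω : Fin (T+1) → Finset V, if Q ω then trajProb step A₀ T ω else 0

open scoped Classical in
/-- One-step transition probability of the COBRA process with branching factor `k`:
every vertex of `C` chooses `k` neighbours independently and uniformly at random with
replacement, and `B` is the set of all chosen vertices. -/
def cobraStep [Fintype V] [DecidableEq V] (G : SimpleGraph V) [DecidableRel G.Adj]
    (k : ℕ) (C B : Finset V) : ℝ :=
  ∑ f : ↥C → Fin k → V,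
    if (∀ x : ↥C, ∀ i : Fin k, G.Adj (x : V) (f x i)) ∧
        B = Finset.image (fun p : ↥C × Fin k => f p.1 p.2) Finset.univ then
      ∏ x : ↥C, ((G.degree (x : V) : ℝ)⁻¹) ^ k
    else 0

/-- `Pr(cov(u) > T)`: probability that after `T` rounds of the COBRA process started at
`C_0 = {u}` the sets `C_1, …, C_T` have not yet covered all vertices. -/
def prCovGT [Fintype V] [DecidableEq V] (G : SimpleGraph V) [DecidableRel G.Adj]
    (k : ℕ) (u : V) (T : ℕ) : ℝ :=
  trajPr (cobraStep G k) {u} T (fun ω => ∃ x : V, ∀ s : Fin (T+1), s ≠ 0 → x ∉ ω s)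

/-- `Pr(infec(v) > T)`: probability that after `T` rounds of the BIPS process with
source `v` (started from `A_0 = {v}`) the infected set is not yet the whole vertex set. -/
def prInfecGT [Fintype V] [DecidableEq V] (G : SimpleGraph V) [DecidableRel G.Adj]
    (r k : ℕ) (v : V) (T : ℕ) : ℝ :=
  trajPr (bipsStep G r k v) {v} T (fun ω => ∀ s : Fin (T+1), ω s ≠ Finset.univ)

/-- Probability that a vertex `u` hits `A` when it chooses one uniform random neighbour,
and then with probability `ρ` a second (independent, uniform) neighbour. -/
def pInfRho [Fintype V] [DecidableEq V] (G : SimpleGraph V) [DecidableRel G.Adj]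
    (r : ℕ) (ρ : ℝ) (A : Finset V) (u : V) : ℝ :=
  1 - (1 - (degIn G A u : ℝ) / (r : ℝ)) * (1 - ρ * (degIn G A u : ℝ) / (r : ℝ))

/-- One-step transition probability of the BIPS process with expected branching factor
`1 + ρ` and source `v`. -/
def bipsRhoStep [Fintype V] [DecidableEq V] (G : SimpleGraph V) [DecidableRel G.Adj]
    (r : ℕ) (ρ : ℝ) (v : V) (A B : Finset V) : ℝ :=
  if v ∈ B then
    ∏ u ∈ Finset.univ.erase v,
      (if u ∈ B then pInfRho G r ρ A u else 1 - pInfRho G r ρ A u)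
  else 0

open scoped Classical in
/-- One-step transition probability of the COBRA process with expected branching factor
`1 + ρ`: each vertex of `C` chooses one uniform random neighbour and, independently with
probability `ρ`, a second uniform random neighbour; `B` is the set of all chosen vertices. -/
def cobraRhoStep [Fintype V] [DecidableEq V] (G : SimpleGraph V) [DecidableRel G.Adj]
    (ρ : ℝ) (C B : Finset V) : ℝ :=
  ∑ f : ↥C → V, ∑ g : ↥C → Option V,
    if (∀ x : ↥C, G.Adj (x : V) (f x)) ∧
        (∀ x : ↥C, ∀ y : V, g x = some y → G.Adj (x : V) y) ∧
        B = Finset.image f Finset.univ ∪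
          Finset.univ.biUnion (fun x : ↥C => (g x).toFinset) then
      ∏ x : ↥C, ((G.degree (x : V) : ℝ)⁻¹ *
        Option.elim (g x) (1 - ρ) (fun _ => ρ * (G.degree (x : V) : ℝ)⁻¹))
    else 0

/-- `Pr(cov(u) > T)` for the COBRA process with expected branching factor `1 + ρ`. -/
def prCovRhoGT [Fintype V] [DecidableEq V] (G : SimpleGraph V) [DecidableRel G.Adj]
    (ρ : ℝ) (u : V) (T : ℕ) : ℝ :=
  trajPr (cobraRhoStep G ρ) {u} T (fun ω => ∃ x : V, ∀ s : Fin (T+1), s ≠ 0 → x ∉ ω s)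

end



noncomputable section AuxDuality
open scoped Classical

variable {V : Type*} [Fintype V] [DecidableEq V]

/-- survival probability recursion -/
private def avoidPr (step : Finset V → Finset V → ℝ) (P : Finset V → Prop) :
    ℕ → Finset V → ℝ
  | 0, A => if P A then 1 else 0
  | (t+1), A => if P A then ∑ B : Finset V, step A B * avoidPr step P t B else 0

private lemma trajPr_forall_zero (step : Finset V → Finset V → ℝ) (A₀ : Finset V)
    (P : Finset V → Prop) :
    trajPr step A₀ 0 (fun ω => ∀ s, P (ω s)) = if P A₀ then 1 else 0 := by
  classical
  rw [trajPr, Finset.sum_eq_single (fun _ => A₀ : Fin 1 → Finset V)]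
  · simp [trajProb]
  · intro ω _ hω
    have h0 : ω 0 ≠ A₀ := fun h => hω (funext fun s => by
      have hs : s = 0 := Subsingleton.elim s 0
      rw [hs, h])
    simp [trajProb, h0]
  · simp

private lemma trajPr_forall_succ (step : Finset V → Finset V → ℝ) (A₀ : Finset V)
    (T : ℕ) (P : Finset V → Prop) :
    trajPr step A₀ (T+1) (fun ω => ∀ s, P (ω s)) =
      if P A₀ then
        ∑ B : Finset V, step A₀ B * trajPr step B T (fun ω => ∀ s, P (ω s))
      else 0 := by
  classical
  have hRHSg : ∀ g : Fin (T+1) → Finset V,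
      (∑ B : Finset V, step A₀ B * (if (∀ s, P (g s)) then
        (if g 0 = B then (1:ℝ) else 0) *
          ∏ i : Fin T, step (g i.castSucc) (g i.succ) else 0)) =
      (if (∀ s, P (g s)) then
        step A₀ (g 0) * ∏ i : Fin T, step (g i.castSucc) (g i.succ) else 0) := by
    intro g
    by_cases hg : ∀ s, P (g s)
    · simp [hg, mul_ite, ite_mul, mul_zero, zero_mul, mul_one, one_mul, mul_assoc]
    · simp [hg]
  rw [trajPr, ← Equiv.sum_comp (Fin.consEquiv fun _ : Fin (T+1+1) => Finset V),
    Fintype.sum_prod_type]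
  simp only [Fin.consEquiv_apply]
  rw [Finset.sum_eq_single A₀]
  · have hfor : ∀ g : Fin (T+1) → Finset V,
        (∀ s : Fin (T+1+1), P (Fin.cons (α := fun _ => Finset V) A₀ g s)) ↔
          (P A₀ ∧ ∀ s : Fin (T+1), P (g s)) := by
      intro g
      rw [Fin.forall_fin_succ]
      simp [Fin.cons_succ]
    have hprob : ∀ g : Fin (T+1) → Finset V,
        trajProb step A₀ (T+1) (Fin.cons (α := fun _ => Finset V) A₀ g) =
          step A₀ (g 0) * ∏ i : Fin T, step (g i.castSucc) (g i.succ) := by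
      intro g
      rw [trajProb, Fin.prod_univ_succ]
      simp [Fin.cons_succ, ← Fin.succ_castSucc]
    by_cases hP : P A₀
    · rw [if_pos hP]
      have hR : ∑ B : Finset V, step A₀ B * trajPr step B T (fun ω => ∀ s, P (ω s)) =
          ∑ g : Fin (T+1) → Finset V, (if (∀ s, P (g s)) then
            step A₀ (g 0) * ∏ i : Fin T, step (g i.castSucc) (g i.succ) else 0) := by
        simp only [trajPr, trajProb, Finset.mul_sum]
        rw [Finset.sum_comm]
        exact Finset.sum_congr rfl fun g _ => by convert hRHSg g
      rw [hR]
      refine Finset.sum_congr rfl fun g _ => ?_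
      by_cases hg : ∀ s : Fin (T+1), P (g s)
      · rw [if_pos ((hfor g).mpr ⟨hP, hg⟩), if_pos hg]
        exact hprob g
      · rw [if_neg (fun hc => hg ((hfor g).mp hc).2), if_neg hg]
    · rw [if_neg hP]
      refine Finset.sum_eq_zero fun g _ => ?_
      rw [if_neg (fun hc => hP ((hfor g).mp hc).1)]
  · intro a _ ha
    refine Finset.sum_eq_zero fun g _ => ?_
    have hz : trajProb step A₀ (T+1)
        ((Fin.consEquiv fun _ : Fin (T+1+1) => Finset V) (a, g)) = 0 := by
      rw [trajProb]
      have h0 : ((Fin.consEquiv fun _ : Fin (T+1+1) => Finset V) (a, g)) 0 = a := rfl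
      rw [h0, if_neg ha, zero_mul]
    rw [hz]
    simp
  · simp

private lemma trajPr_forall (step : Finset V → Finset V → ℝ) (P : Finset V → Prop) :
    ∀ (T : ℕ) (A₀ : Finset V),
      trajPr step A₀ T (fun ω => ∀ s, P (ω s)) = avoidPr step P T A₀
  | 0, A₀ => by rw [trajPr_forall_zero, avoidPr]
  | (T+1), A₀ => by
    rw [trajPr_forall_succ, avoidPr]
    split_ifs with h
    · exact Finset.sum_congr rfl fun B _ => by rw [trajPr_forall step P T B]
    · rfl

private lemma chainProb_of_not_mem (G : SimpleGraph V) [DecidableRel G.Adj]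
    (r k : ℕ) (v : V) :
    ∀ (t : ℕ) (B : Finset V), v ∉ B → chainProb (bipsStep G r k v) {v} t B = 0
  | 0, B, hB => by
    have : B ≠ {v} := fun h => hB (h ▸ Finset.mem_singleton_self v)
    rw [chainProb]
    simp [this]
  | (t+1), B, hB => by
    rw [chainProb]
    refine Finset.sum_eq_zero fun A _ => ?_
    rw [bipsStep, if_neg hB, mul_zero]

private lemma bips_onestep (G : SimpleGraph V) [DecidableRel G.Adj] (r k : ℕ) (v : V)
    (C A : Finset V) (hv : v ∉ C) :
    ∑ B : Finset V, (if C ∩ B = ∅ then bipsStep G r k v A B else 0) =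
      ∏ u ∈ C, (1 - pInf G r k A u) := by
  classical
  set p : V → ℝ := pInf G r k A with hp
  have hCsub : C ⊆ Finset.univ.erase v :=
    Finset.subset_erase.mpr ⟨Finset.subset_univ C, hv⟩
  set F : Finset V → ℝ := fun S => (if C ∩ S = ∅ then 1 else 0) *
      ∏ u ∈ Finset.univ.erase v, (if u ∈ S then p u else 1 - p u) with hF
  have key : ∀ B : Finset V, (if C ∩ B = ∅ then bipsStep G r k v A B else 0) =
      if v ∈ B then F (B.erase v) else 0 := by
    intro B
    by_cases hvB : v ∈ B
    · rw [if_pos hvB, hF]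
      have h1 : C ∩ B = C ∩ B.erase v := by
        ext u
        simp only [Finset.mem_inter, Finset.mem_erase]
        exact ⟨fun ⟨h1, h2⟩ => ⟨h1, fun he => hv (he ▸ h1), h2⟩,
          fun ⟨h1, _, h2⟩ => ⟨h1, h2⟩⟩
      have h2 : bipsStep G r k v A B =
          ∏ u ∈ Finset.univ.erase v, (if u ∈ B.erase v then p u else 1 - p u) := by
        rw [bipsStep, if_pos hvB]
        refine Finset.prod_congr rfl fun u hu => ?_
        have hu' : u ≠ v := (Finset.mem_erase.mp hu).1
        have : u ∈ B ↔ u ∈ B.erase v := by simp [Finset.mem_erase, hu']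
        simp only [this, hp]
      rw [h1, h2]
      split_ifs with h <;> simp [h]
    · rw [if_neg hvB, bipsStep, if_neg hvB]
      simp
  rw [Finset.sum_congr rfl fun B _ => key B]
  have hbij : (∑ B : Finset V, if v ∈ B then F (B.erase v) else 0) =
      ∑ S ∈ (Finset.univ.erase v).powerset, F S := by
    rw [← Finset.sum_filter]
    refine Finset.sum_nbij' (fun B => B.erase v) (fun S => insert v S) ?_ ?_ ?_ ?_ ?_
    · intro B hB
      simp only [Finset.mem_powerset]
      exact Finset.erase_subset_erase v (Finset.subset_univ B)
    · intro S hS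
      simp only [Finset.mem_filter, Finset.mem_univ, true_and]
      exact Finset.mem_insert_self v S
    · intro B hB
      exact Finset.insert_erase (Finset.mem_filter.mp hB).2
    · intro S hS
      refine Finset.erase_insert fun hvS => ?_
      exact (Finset.mem_erase.mp ((Finset.mem_powerset.mp hS) hvS)).1 rfl
    · intro B hB
      rfl
  rw [hbij]
  have hFS : ∀ S ∈ (Finset.univ.erase v).powerset,
      F S = (∏ u ∈ S, (if u ∈ C then (0:ℝ) else p u)) *
        ∏ u ∈ Finset.univ.erase v \ S, (1 - p u) := by
    intro S hS
    have hSsub : S ⊆ Finset.univ.erase v := Finset.mem_powerset.mp hS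
    have hsplit : ∏ u ∈ Finset.univ.erase v, (if u ∈ S then p u else 1 - p u) =
        (∏ u ∈ S, p u) * ∏ u ∈ Finset.univ.erase v \ S, (1 - p u) := by
      rw [Finset.prod_ite]
      congr 1
      · congr 1
        rw [Finset.filter_mem_eq_inter, Finset.inter_eq_right.mpr hSsub]
      · congr 1
        rw [Finset.sdiff_eq_filter]
    rw [hF]
    simp only
    rw [hsplit]
    by_cases hCS : C ∩ S = ∅
    · rw [if_pos hCS, one_mul]
      congr 1
      refine (Finset.prod_congr rfl fun u hu => ?_).symm
      have : u ∉ C := fun huC => by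
        have : u ∈ C ∩ S := Finset.mem_inter.mpr ⟨huC, hu⟩
        rw [hCS] at this
        exact absurd this (Finset.notMem_empty u)
      rw [if_neg this]
    · rw [if_neg hCS, zero_mul]
      obtain ⟨u, hu⟩ := Finset.nonempty_iff_ne_empty.mpr hCS
      rw [Finset.mem_inter] at hu
      have hz : (∏ u ∈ S, if u ∈ C then (0:ℝ) else p u) = 0 :=
        Finset.prod_eq_zero hu.2 (by rw [if_pos hu.1])
      rw [hz, zero_mul]
  rw [Finset.sum_congr rfl hFS, ← Finset.prod_add]
  have : ∀ u ∈ Finset.univ.erase v,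
      ((if u ∈ C then (0:ℝ) else p u) + (1 - p u)) =
        (if u ∈ C then (1 - p u) else 1) := by
    intro u _
    split_ifs <;> ring
  rw [Finset.prod_congr rfl this, Finset.prod_ite_mem,
    Finset.inter_eq_right.mpr hCsub]

private lemma cobra_onestep (G : SimpleGraph V) [DecidableRel G.Adj] {r : ℕ} (k : ℕ)
    (hreg : G.IsRegularOfDegree r) (C A : Finset V) (hr : ∀ x ∈ C, r ≠ 0) :
    ∑ B : Finset V, (if B ∩ A = ∅ then cobraStep G k C B else 0) =
      ∏ u ∈ C, (1 - (degIn G A u : ℝ) / (r : ℝ)) ^ k := by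
  classical
  have h1 : ∑ B : Finset V, (if B ∩ A = ∅ then cobraStep G k C B else 0) =
      ∑ f : ↥C → Fin k → V,
        (if (∀ x : ↥C, ∀ i : Fin k, f x i ∈ G.neighborFinset (x:V) \ A) then
          ∏ x : ↥C, ((G.degree (x:V) : ℝ)⁻¹) ^ k else 0) := by
    have push : ∀ B : Finset V, (if B ∩ A = ∅ then cobraStep G k C B else 0) =
        ∑ f : ↥C → Fin k → V,
          (if B ∩ A = ∅ then
            (if (∀ x : ↥C, ∀ i : Fin k, G.Adj (x:V) (f x i)) ∧
                B = Finset.image (fun p : ↥C × Fin k => f p.1 p.2) Finset.univ then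
              ∏ x : ↥C, ((G.degree (x:V) : ℝ)⁻¹) ^ k else 0) else 0) := by
      intro B
      rw [cobraStep]
      split_ifs with h <;> simp [h]
    rw [Finset.sum_congr rfl fun B _ => push B, Finset.sum_comm]
    refine Finset.sum_congr rfl fun f _ => ?_
    have step1 : ∀ B : Finset V,
        (if B ∩ A = ∅ then
          (if (∀ x : ↥C, ∀ i : Fin k, G.Adj (x:V) (f x i)) ∧
              B = Finset.image (fun p : ↥C × Fin k => f p.1 p.2) Finset.univ then
            ∏ x : ↥C, ((G.degree (x:V) : ℝ)⁻¹) ^ k else 0) else 0) =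
        (if B = Finset.image (fun p : ↥C × Fin k => f p.1 p.2) Finset.univ then
          (if (∀ x : ↥C, ∀ i : Fin k, G.Adj (x:V) (f x i)) ∧ B ∩ A = ∅ then
            ∏ x : ↥C, ((G.degree (x:V) : ℝ)⁻¹) ^ k else 0) else 0) := by
      intro B
      by_cases hB : B = Finset.image (fun p : ↥C × Fin k => f p.1 p.2) Finset.univ
      · rw [if_pos hB]
        split_ifs <;> tauto
      · rw [if_neg hB]
        split_ifs <;> tauto
    rw [Finset.sum_congr rfl fun B _ => step1 B, Finset.sum_ite_eq']
    rw [if_pos (Finset.mem_univ _)]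
    have hcond : ((∀ x : ↥C, ∀ i : Fin k, G.Adj (x:V) (f x i)) ∧
        Finset.image (fun p : ↥C × Fin k => f p.1 p.2) Finset.univ ∩ A = ∅) ↔
        (∀ x : ↥C, ∀ i : Fin k, f x i ∈ G.neighborFinset (x:V) \ A) := by
      simp only [Finset.eq_empty_iff_forall_notMem, Finset.mem_inter,
        Finset.mem_image, Finset.mem_univ, Finset.mem_sdiff,
        SimpleGraph.mem_neighborFinset]
      constructor
      · rintro ⟨hadj, hdisj⟩ x i
        refine ⟨hadj x i, fun hA => hdisj (f x i) ⟨⟨(x, i), by simp⟩, hA⟩⟩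
      · intro h
        refine ⟨fun x i => (h x i).1, ?_⟩
        rintro y ⟨⟨⟨x, i⟩, -, rfl⟩, hyA⟩
        exact (h x i).2 hyA
    rw [if_congr hcond rfl rfl]
  rw [h1]
  have h2 : ∑ f : ↥C → Fin k → V,
      (if (∀ x : ↥C, ∀ i : Fin k, f x i ∈ G.neighborFinset (x:V) \ A) then
        ∏ x : ↥C, ((G.degree (x:V) : ℝ)⁻¹) ^ k else 0) =
      (Fintype.piFinset fun x : ↥C =>
        Fintype.piFinset fun _ : Fin k => G.neighborFinset (x:V) \ A).card •
        ∏ x : ↥C, ((G.degree (x:V) : ℝ)⁻¹) ^ k := by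
    rw [(Finset.sum_filter
      (fun f : ↥C → Fin k → V =>
        ∀ x : ↥C, ∀ i : Fin k, f x i ∈ G.neighborFinset (x:V) \ A)
      (fun _ => ∏ x : ↥C, ((G.degree (x:V) : ℝ)⁻¹) ^ k)).symm,
      Finset.sum_const]
    congr 2
    ext f
    simp [Fintype.mem_piFinset]
  rw [h2, Fintype.card_piFinset]
  have hcard : ∀ x : ↥C, (Fintype.piFinset fun _ : Fin k =>
      G.neighborFinset (x:V) \ A).card = (r - degIn G A (x:V)) ^ k := by
    intro x
    rw [Fintype.card_piFinset]
    simp only [Finset.prod_const, Finset.card_univ, Fintype.card_fin]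
    congr 1
    have := Finset.card_inter_add_card_sdiff (G.neighborFinset (x:V)) A
    have hdeg : (G.neighborFinset (x:V)).card = r := hreg (x:V)
    rw [hdeg] at this
    have hd : degIn G A (x:V) = (G.neighborFinset (x:V) ∩ A).card := rfl
    omega
  rw [Finset.prod_congr rfl fun x _ => hcard x, nsmul_eq_mul, Nat.cast_prod,
    ← Finset.prod_mul_distrib,
    ← Finset.prod_coe_sort C (fun u => (1 - (degIn G A u : ℝ) / (r:ℝ)) ^ k)]
  refine Finset.prod_congr rfl fun x _ => ?_
  have hr0 : (r : ℝ) ≠ 0 := Nat.cast_ne_zero.mpr (hr (x:V) x.2)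
  have hdle : degIn G A (x:V) ≤ r := by
    have h1 : degIn G A (x:V) ≤ (G.neighborFinset (x:V)).card :=
      Finset.card_le_card Finset.inter_subset_left
    have h2 : (G.neighborFinset (x:V)).card = r := hreg (x:V)
    omega
  rw [hreg (x:V)]
  push_cast [Nat.cast_sub hdle]
  rw [← mul_pow]
  congr 1
  field_simp

private lemma avoid_eq (G : SimpleGraph V) [DecidableRel G.Adj] (r k : ℕ)
    (hreg : G.IsRegularOfDegree r) (hsub : r = 0 → ∀ a b : V, a = b) (v : V) :
    ∀ (t : ℕ) (C : Finset V),
      avoidPr (cobraStep G k) (fun A => v ∉ A) t C =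
        ∑ B : Finset V,
          (if C ∩ B = ∅ then chainProb (bipsStep G r k v) {v} t B else 0)
  | 0, C => by
    rw [avoidPr]
    have h : ∀ B : Finset V,
        (if C ∩ B = ∅ then chainProb (bipsStep G r k v) {v} 0 B else 0) =
        (if B = ({v} : Finset V) then (if C ∩ B = ∅ then (1:ℝ) else 0) else 0) := by
      intro B
      rw [chainProb]
      split_ifs <;> simp_all
    rw [Finset.sum_congr rfl fun B _ => h B, Finset.sum_ite_eq',
      if_pos (Finset.mem_univ _)]
    by_cases hv : v ∈ C
    · rw [if_neg (fun h' : v ∉ C => h' hv), if_neg (fun h' =>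
        Finset.eq_empty_iff_forall_notMem.mp h' v
          (Finset.mem_inter.mpr ⟨hv, Finset.mem_singleton_self v⟩))]
    · rw [if_pos hv, if_pos (Finset.eq_empty_iff_forall_notMem.mpr fun x hx => by
        rcases Finset.mem_inter.mp hx with ⟨hx1, hx2⟩
        rw [Finset.mem_singleton.mp hx2] at hx1
        exact hv hx1)]
  | (t+1), C => by
    by_cases hv : v ∈ C
    · rw [avoidPr, if_neg (fun h : v ∉ C => h hv)]
      refine (Finset.sum_eq_zero fun B _ => ?_).symm
      by_cases hCB : C ∩ B = ∅
      · rw [if_pos hCB]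
        exact chainProb_of_not_mem G r k v (t+1) B (fun hvB =>
          Finset.eq_empty_iff_forall_notMem.mp hCB v
            (Finset.mem_inter.mpr ⟨hv, hvB⟩))
      · rw [if_neg hCB]
    · rw [avoidPr, if_pos hv]
      have hr : ∀ x ∈ C, r ≠ 0 := fun x hx h0 => hv ((hsub h0 x v) ▸ hx)
      have hprod : ∀ A : Finset V,
          ∏ u ∈ C, (1 - (degIn G A u : ℝ) / (r:ℝ)) ^ k =
            ∏ u ∈ C, (1 - pInf G r k A u) := by
        intro A
        refine Finset.prod_congr rfl fun u _ => ?_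
        rw [pInf]
        ring
      have hL : (∑ B : Finset V, cobraStep G k C B *
            avoidPr (cobraStep G k) (fun A => v ∉ A) t B) =
          ∑ A : Finset V, chainProb (bipsStep G r k v) {v} t A *
            ∏ u ∈ C, (1 - pInf G r k A u) := by
        rw [Finset.sum_congr rfl fun B (_ : B ∈ Finset.univ) => by
          rw [avoid_eq G r k hreg hsub v t B, Finset.mul_sum]]
        rw [Finset.sum_comm]
        refine Finset.sum_congr rfl fun A _ => ?_
        rw [← hprod A, ← cobra_onestep G k hreg C A hr, Finset.mul_sum]
        refine Finset.sum_congr rfl fun B _ => ?_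
        split_ifs <;> ring
      have hR : (∑ B : Finset V,
            (if C ∩ B = ∅ then chainProb (bipsStep G r k v) {v} (t+1) B else 0)) =
          ∑ A : Finset V, chainProb (bipsStep G r k v) {v} t A *
            ∏ u ∈ C, (1 - pInf G r k A u) := by
        have e1 : ∀ B : Finset V,
            (if C ∩ B = ∅ then chainProb (bipsStep G r k v) {v} (t+1) B else 0) =
            ∑ A : Finset V, chainProb (bipsStep G r k v) {v} t A *
              (if C ∩ B = ∅ then bipsStep G r k v A B else 0) := by
          intro B
          rw [chainProb]
          split_ifs with h
          · rfl
          · simp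
        rw [Finset.sum_congr rfl fun B _ => e1 B, Finset.sum_comm]
        refine Finset.sum_congr rfl fun A _ => ?_
        rw [← Finset.mul_sum, bips_onestep G r k v C A hv]
      rw [hL]
      exact hR.symm

end AuxDuality


open scoped Classical in
/-- duality, Theorem 4 of the paper.  For a connected `r`-regular
graph `G`, `k ≥ 1`, a vertex `v`, a set `C ⊆ V` and `t ≥ 0`, the probability that the
COBRA process with branching factor `k` started from `C_0 = C` has not hit `v` by time
`t` equals the probability that in the BIPS process with source `v` and parameter `k`
the infected set `A_t` is disjoint from `C`. -/
theorem cobra_bips_duality {V : Type*} [Fintype V] [DecidableEq V] (G : SimpleGraph V)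
    [DecidableRel G.Adj] (r : ℕ) (hconn : G.Connected) (hreg : G.IsRegularOfDegree r)
    (k : ℕ) (hk : 1 ≤ k) (v : V) (C : Finset V) (t : ℕ) :
    trajPr (cobraStep G k) C t (fun ω => ∀ s : Fin (t+1), v ∉ ω s) =
      ∑ B : Finset V, (if C ∩ B = ∅ then chainProb (bipsStep G r k v) {v} t B else 0) := by
  classical
  have hsub : r = 0 → ∀ a b : V, a = b := by
    intro h0 a b
    have hadj : ∀ x y : V, ¬ G.Adj x y := by
      intro x y hxy
      have h1 : y ∈ G.neighborFinset x := by
        simpa [SimpleGraph.mem_neighborFinset] using hxy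
      have h2 : (G.neighborFinset x).card = r := hreg x
      rw [h0, Finset.card_eq_zero] at h2
      rw [h2] at h1
      exact Finset.notMem_empty y h1
    obtain ⟨w⟩ := hconn.preconnected a b
    induction w with
    | nil => rfl
    | cons h p ih => exact absurd h (hadj _ _)
  exact (trajPr_forall (cobraStep G k) (fun A => v ∉ A) t C).trans
    (avoid_eq G r k hreg hsub v t C)
end

section
/- Let G be a connected r-regular graph on n vertices with λ < 1, and consider the BIPS process on G with source v and parameter k = 2. Then for every set A ⊆ V with v ∈ A and every t ≥ 0, E(|A_{t+1}| | A_t = A) ≥ |A|·(1 + (1 − λ²)·(1 − |A|/n)). -/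
open Finset

set_option linter.unusedSectionVars false

section BIPSHelpers
open Finset Matrix
open scoped InnerProductSpace


variable {V : Type*} [Fintype V] [DecidableEq V] (G : SimpleGraph V) [DecidableRel G.Adj]
  (r : ℕ)

lemma sum_powerset_prod_ite (s : Finset V) (p : V → ℝ) :
    ∑ B ∈ s.powerset, ∏ u ∈ s, (if u ∈ B then p u else 1 - p u) = 1 := by
  induction s using Finset.induction_on with
  | empty => simp
  | @insert a s ha ih =>
    rw [Finset.sum_powerset_insert ha]
    have h1 : ∀ B ∈ s.powerset, ∏ u ∈ insert a s, (if u ∈ B then p u else 1 - p u)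
        = (1 - p a) * ∏ u ∈ s, (if u ∈ B then p u else 1 - p u) := by
      intro B hB
      rw [Finset.prod_insert ha, if_neg (fun h => ha (Finset.mem_powerset.1 hB h))]
    have h2 : ∀ B ∈ s.powerset, ∏ u ∈ insert a s, (if u ∈ insert a B then p u else 1 - p u)
        = p a * ∏ u ∈ s, (if u ∈ B then p u else 1 - p u) := by
      intro B hB
      rw [Finset.prod_insert ha, if_pos (Finset.mem_insert_self a B)]
      congr 1
      refine Finset.prod_congr rfl fun u hu => ?_
      have : u ∈ insert a B ↔ u ∈ B := by
        simp only [Finset.mem_insert, or_iff_right_iff_imp]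
        rintro rfl; exact absurd hu ha
      simp [this]
    rw [Finset.sum_congr rfl h1, Finset.sum_congr rfl h2, ← Finset.mul_sum, ← Finset.mul_sum, ih]
    ring

lemma sum_powerset_prod_ite_card (s : Finset V) (p : V → ℝ) (g : V → ℝ) :
    ∑ B ∈ s.powerset, (∏ u ∈ s, (if u ∈ B then p u else 1 - p u)) * (∑ u ∈ B, g u)
      = ∑ u ∈ s, p u * g u := by
  induction s using Finset.induction_on with
  | empty => simp
  | @insert a s ha ih =>
    rw [Finset.sum_powerset_insert ha]
    have h1 : ∀ B ∈ s.powerset,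
        (∏ u ∈ insert a s, (if u ∈ B then p u else 1 - p u)) * (∑ u ∈ B, g u)
        = (1 - p a) * ((∏ u ∈ s, (if u ∈ B then p u else 1 - p u)) * (∑ u ∈ B, g u)) := by
      intro B hB
      rw [Finset.prod_insert ha, if_neg (fun h => ha (Finset.mem_powerset.1 hB h)), mul_assoc]
    have h2 : ∀ B ∈ s.powerset,
        (∏ u ∈ insert a s, (if u ∈ insert a B then p u else 1 - p u)) * (∑ u ∈ insert a B, g u)
        = p a * ((∏ u ∈ s, (if u ∈ B then p u else 1 - p u)) * (∑ u ∈ B, g u))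
          + p a * g a * (∏ u ∈ s, (if u ∈ B then p u else 1 - p u)) := by
      intro B hB
      have haB : a ∉ B := fun h => ha (Finset.mem_powerset.1 hB h)
      rw [Finset.prod_insert ha, if_pos (Finset.mem_insert_self a B), Finset.sum_insert haB]
      have hc : ∏ u ∈ s, (if u ∈ insert a B then p u else 1 - p u)
          = ∏ u ∈ s, (if u ∈ B then p u else 1 - p u) := by
        refine Finset.prod_congr rfl fun u hu => ?_
        have : u ∈ insert a B ↔ u ∈ B := by
          simp only [Finset.mem_insert, or_iff_right_iff_imp]
          rintro rfl; exact absurd hu ha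
        simp [this]
      rw [hc]; ring
    rw [Finset.sum_congr rfl h1, Finset.sum_congr rfl h2, Finset.sum_add_distrib,
      ← Finset.mul_sum, ← Finset.mul_sum, ih, ← Finset.mul_sum, sum_powerset_prod_ite,
      Finset.sum_insert ha]
    ring


lemma bips_expectation (G : SimpleGraph V) [DecidableRel G.Adj] (r k : ℕ) (v : V)
    (A : Finset V) :
    ∑ B : Finset V, bipsStep G r k v A B * (B.card : ℝ)
      = 1 + ∑ u ∈ Finset.univ.erase v, pInf G r k A u := by
  classical
  have huniv : (Finset.univ : Finset V) = insert v (Finset.univ.erase v) :=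
    (Finset.insert_erase (Finset.mem_univ v)).symm
  have hv' : v ∉ Finset.univ.erase v := Finset.notMem_erase v _
  calc ∑ B : Finset V, bipsStep G r k v A B * (B.card : ℝ)
      = ∑ B ∈ (Finset.univ : Finset V).powerset, bipsStep G r k v A B * (B.card : ℝ) := by
        rw [Finset.powerset_univ]
    _ = ∑ B ∈ (insert v (Finset.univ.erase v)).powerset,
          bipsStep G r k v A B * (B.card : ℝ) := by rw [← huniv]
    _ = ∑ B ∈ (Finset.univ.erase v).powerset, bipsStep G r k v A B * (B.card : ℝ)
        + ∑ B ∈ (Finset.univ.erase v).powerset,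
            bipsStep G r k v A (insert v B) * ((insert v B).card : ℝ) := by
        rw [Finset.sum_powerset_insert hv']
    _ = 0 + ∑ B ∈ (Finset.univ.erase v).powerset,
          (∏ u ∈ Finset.univ.erase v, (if u ∈ B then pInf G r k A u else 1 - pInf G r k A u))
            * ((B.card : ℝ) + 1) := by
        congr 1
        · refine (Finset.sum_eq_zero fun B hB => ?_)
          have : v ∉ B := fun h => hv' (Finset.mem_powerset.1 hB h)
          rw [bipsStep, if_neg this, zero_mul]
        · refine Finset.sum_congr rfl fun B hB => ?_
          have hvB : v ∉ B := fun h => hv' (Finset.mem_powerset.1 hB h)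
          rw [bipsStep, if_pos (Finset.mem_insert_self v B)]
          rw [Finset.card_insert_of_notMem hvB]
          push_cast
          congr 1
          refine Finset.prod_congr rfl fun u hu => ?_
          have : u ∈ insert v B ↔ u ∈ B := by
            simp only [Finset.mem_insert, or_iff_right_iff_imp]
            rintro rfl; exact absurd hu hv'
          simp [this]
    _ = 1 + ∑ u ∈ Finset.univ.erase v, pInf G r k A u := by
        rw [zero_add]
        have : ∀ B ∈ (Finset.univ.erase v).powerset,
            (∏ u ∈ Finset.univ.erase v,
              (if u ∈ B then pInf G r k A u else 1 - pInf G r k A u)) * ((B.card : ℝ) + 1)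
            = (∏ u ∈ Finset.univ.erase v,
                (if u ∈ B then pInf G r k A u else 1 - pInf G r k A u)) * (∑ u ∈ B, (1:ℝ))
              + (∏ u ∈ Finset.univ.erase v,
                (if u ∈ B then pInf G r k A u else 1 - pInf G r k A u)) := by
          intro B _; rw [Finset.sum_const, nsmul_eq_mul, mul_one]; ring
        rw [Finset.sum_congr rfl this, Finset.sum_add_distrib,
          sum_powerset_prod_ite_card _ (fun u => pInf G r k A u) (fun _ => (1:ℝ)),
          sum_powerset_prod_ite _ (fun u => pInf G r k A u)]
        simp [add_comm]



lemma transMatrix_symm (x y : V) : transMatrix G r x y = transMatrix G r y x := by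
  simp [transMatrix, G.adj_comm]

lemma transMatrix_nonneg (x y : V) : 0 ≤ transMatrix G r x y := by
  simp only [transMatrix, Matrix.of_apply]
  split <;> positivity

lemma transMatrix_isHermitian : (transMatrix G r).IsHermitian := by
  ext x y
  simp [Matrix.conjTranspose_apply, transMatrix_symm G r y x]

variable (hreg : G.IsRegularOfDegree r) (hr : 0 < r)

include hreg hr in
lemma transMatrix_rowSum (x : V) : ∑ y, transMatrix G r x y = 1 := by
  have : ∑ y, transMatrix G r x y = ∑ y ∈ Finset.univ.filter (G.Adj x), (r : ℝ)⁻¹ := by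
    rw [Finset.sum_filter]
    rfl
  rw [this, Finset.sum_const, ← SimpleGraph.neighborFinset_eq_filter, nsmul_eq_mul]
  rw [G.card_neighborFinset_eq_degree, hreg x]
  field_simp

include hreg hr in
lemma sum_mulVec (g : V → ℝ) :
    ∑ x, ((transMatrix G r) *ᵥ g) x = ∑ x, g x := by
  simp only [Matrix.mulVec, dotProduct]
  rw [Finset.sum_comm]
  refine Finset.sum_congr rfl fun y _ => ?_
  rw [← Finset.sum_mul]
  have : ∑ x, transMatrix G r x y = 1 := by
    rw [show ∑ x, transMatrix G r x y = ∑ x, transMatrix G r y x from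
      Finset.sum_congr rfl fun x _ => transMatrix_symm G r x y]
    exact transMatrix_rowSum G r hreg hr y
  rw [this, one_mul]

include hreg hr in
lemma transMatrix_mulVec_const (c : ℝ) :
    (transMatrix G r) *ᵥ (fun _ => c) = fun _ => c := by
  funext x
  simp only [Matrix.mulVec, dotProduct]
  rw [show ∑ y, transMatrix G r x y * c = (∑ y, transMatrix G r x y) * c from
    (Finset.sum_mul ..).symm, transMatrix_rowSum G r hreg hr x, one_mul]

include hreg hr in
lemma eig_abs_le_one (μ : ℝ) (g : V → ℝ) (hg : g ≠ 0)
    (heq : (transMatrix G r) *ᵥ g = μ • g) : |μ| ≤ 1 := by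
  have hne : (Finset.univ : Finset V).Nonempty := by
    obtain ⟨y, hy⟩ := Function.ne_iff.1 hg
    exact ⟨y, Finset.mem_univ y⟩
  obtain ⟨x, -, hx⟩ := Finset.exists_max_image Finset.univ (fun z => |g z|) hne
  have hgx : 0 < |g x| := by
    obtain ⟨y, hy⟩ := Function.ne_iff.1 hg
    have := hx y (Finset.mem_univ y)
    have : 0 < |g y| := abs_pos.2 hy
    linarith [hx y (Finset.mem_univ y)]
  have key : |μ| * |g x| ≤ |g x| := by
    have h1 : |μ * g x| = |((transMatrix G r) *ᵥ g) x| := by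
      rw [heq]; simp
    rw [← abs_mul, h1]
    calc |((transMatrix G r) *ᵥ g) x| = |∑ y, transMatrix G r x y * g y| := rfl
      _ ≤ ∑ y, |transMatrix G r x y * g y| := Finset.abs_sum_le_sum_abs _ _
      _ ≤ ∑ y, transMatrix G r x y * |g x| := by
          refine Finset.sum_le_sum fun y _ => ?_
          rw [abs_mul, abs_of_nonneg (transMatrix_nonneg G r x y)]
          exact mul_le_mul_of_nonneg_left (hx y (Finset.mem_univ y))
            (transMatrix_nonneg G r x y)
      _ = |g x| := by
          rw [← Finset.sum_mul, transMatrix_rowSum G r hreg hr x, one_mul]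
  exact le_of_mul_le_mul_right (by linarith [key]) hgx

include hreg hr in
lemma secondEigen_bddAbove :
    BddAbove {y : ℝ | ∃ (μ : ℝ) (f : V → ℝ), y = |μ| ∧ f ≠ 0 ∧ (∑ x, f x) = 0 ∧
      (transMatrix G r).mulVec f = μ • f} := by
  refine ⟨1, ?_⟩
  rintro y ⟨μ, g, rfl, hg, -, heq⟩
  exact eig_abs_le_one G r hreg hr μ g hg heq

lemma secondEigen_nonneg : 0 ≤ secondEigen G r := by
  apply Real.sSup_nonneg
  rintro y ⟨μ, g, rfl, -, -, -⟩
  positivity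

include hreg hr in
lemma eig_le_secondEigen (μ : ℝ) (g : V → ℝ) (hg : g ≠ 0) (hsum : ∑ x, g x = 0)
    (heq : (transMatrix G r) *ᵥ g = μ • g) : |μ| ≤ secondEigen G r :=
  le_csSup (secondEigen_bddAbove G r hreg hr) ⟨μ, g, rfl, hg, hsum, heq⟩


lemma euclid_inner (u w : EuclideanSpace ℝ V) : ⟪u, w⟫_ℝ = ∑ x, u x * w x := by
  simp [PiLp.inner_apply, RCLike.inner_apply, mul_comm]

include hreg hr in
lemma mulVec_swap (u w : V → ℝ) :
    ∑ x, ((transMatrix G r) *ᵥ u) x * w x = ∑ x, u x * ((transMatrix G r) *ᵥ w) x := by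
  simp only [Matrix.mulVec, dotProduct, Finset.sum_mul, Finset.mul_sum]
  rw [Finset.sum_comm]
  refine Finset.sum_congr rfl fun y _ => Finset.sum_congr rfl fun x _ => ?_
  rw [transMatrix_symm G r x y]; ring

set_option maxHeartbeats 2000000 in
include hreg hr in
lemma spectral_bound (hlam : secondEigen G r < 1) (f : V → ℝ) (hf : ∑ x, f x = 0) :
    ∑ x, ((transMatrix G r) *ᵥ f) x ^ 2 ≤ secondEigen G r ^ 2 * ∑ x, f x ^ 2 := by
  classical
  set lam := secondEigen G r with hlamdef
  have hH : (transMatrix G r).IsHermitian := transMatrix_isHermitian G r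
  set e := hH.eigenvectorBasis with he
  set μ := hH.eigenvalues with hmu
  have hmul : ∀ i, (transMatrix G r) *ᵥ ⇑(e i) = μ i • ⇑(e i) :=
    fun i => hH.mulVec_eigenvectorBasis i
  let F : EuclideanSpace ℝ V := WithLp.toLp 2 f
  let Pf : EuclideanSpace ℝ V := WithLp.toLp 2 ((transMatrix G r) *ᵥ f)
  set a : V → ℝ := fun i => ∑ x, e i x * f x with ha
  have hinner : ∀ i, ⟪e i, F⟫_ℝ = a i := fun i => euclid_inner (e i) F
  have hinnerPf : ∀ i, ⟪e i, Pf⟫_ℝ = μ i * a i := by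
    intro i
    rw [euclid_inner (e i) Pf]
    calc ∑ x, e i x * Pf x = ∑ x, (⇑(e i)) x * ((transMatrix G r) *ᵥ f) x := rfl
      _ = ∑ x, ((transMatrix G r) *ᵥ ⇑(e i)) x * f x := (mulVec_swap G r hreg hr _ _).symm
      _ = ∑ x, (μ i • ⇑(e i)) x * f x := by rw [hmul i]
      _ = μ i * a i := by
          rw [ha, Finset.mul_sum]
          refine Finset.sum_congr rfl fun x _ => ?_
          show μ i * e i x * f x = μ i * (e i x * f x)
          ring
  have key : ∀ i, (μ i * a i) ^ 2 ≤ lam ^ 2 * a i ^ 2 := by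
    intro i
    by_cases hai : a i = 0
    · simp [hai]
    · have hia : μ i ^ 2 ≤ lam ^ 2 := by
        by_cases hμ1 : μ i = 1
        · exfalso
          have hP1 : (transMatrix G r) *ᵥ (fun x => e i x) = fun x => e i x := by
            have h := hmul i
            rw [hμ1, one_smul] at h
            exact h
          set c : ℝ := (∑ x, e i x) / (Fintype.card V : ℝ) with hc
          set w : V → ℝ := fun x => e i x - c with hw
          have hcardpos : (0:ℝ) < (Fintype.card V : ℝ) := by
            have : Nonempty V := ⟨i⟩
            exact_mod_cast Fintype.card_pos
          have hsumw : ∑ x, w x = 0 := by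
            simp only [hw, Finset.sum_sub_distrib, Finset.sum_const, nsmul_eq_mul]
            rw [hc]
            field_simp
            simp [Finset.card_univ]
          have hPw : (transMatrix G r) *ᵥ w = (1:ℝ) • w := by
            rw [show w = (fun x => e i x) - (fun _ => c) from funext fun x => rfl,
              Matrix.mulVec_sub, hP1, transMatrix_mulVec_const G r hreg hr c, one_smul]
          by_cases hwz : w = 0
          · apply hai
            have hei : ∀ x, e i x = c := by
              intro x
              have := congrFun hwz x
              simpa [hw, sub_eq_zero] using this
            rw [ha]
            calc ∑ x, e i x * f x = ∑ x, c * f x :=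
                  Finset.sum_congr rfl fun x _ => by rw [hei x]
              _ = c * ∑ x, f x := (Finset.mul_sum ..).symm
              _ = 0 := by rw [hf, mul_zero]
          · have h1 : |(1:ℝ)| ≤ lam := eig_le_secondEigen G r hreg hr 1 w hwz hsumw hPw
            rw [abs_one] at h1
            linarith
        · have hsum : ∑ x, e i x = 0 := by
            have h1 : ∑ x, ((transMatrix G r) *ᵥ ⇑(e i)) x = ∑ x, (⇑(e i)) x :=
              sum_mulVec G r hreg hr _
            rw [hmul i] at h1
            simp only [Pi.smul_apply, smul_eq_mul] at h1
            rw [← Finset.mul_sum] at h1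
            by_contra hs
            apply hμ1
            have hs' : (∑ x, (⇑(e i)) x) ≠ 0 := hs
            have h2 : (μ i - 1) * (∑ x, (⇑(e i)) x) = 0 := by
              rw [sub_mul, one_mul, h1, sub_self]
            rcases mul_eq_zero.1 h2 with h | h
            · linarith [h]
            · exact absurd h hs'
          have hez : ⇑(e i) ≠ (0 : V → ℝ) := by
            intro h
            exact e.orthonormal.ne_zero i ((WithLp.equiv 2 (V → ℝ)).injective h)
          have habs := eig_le_secondEigen G r hreg hr (μ i) (⇑(e i)) hez hsum (hmul i)
          have h0 : (0:ℝ) ≤ lam := secondEigen_nonneg G r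
          nlinarith [abs_nonneg (μ i), sq_abs (μ i)]
      nlinarith [sq_nonneg (a i)]
  have hPfnorm : ∑ x, ((transMatrix G r) *ᵥ f) x ^ 2 = ∑ i, (μ i * a i) ^ 2 := by
    have h1 : ⟪Pf, Pf⟫_ℝ = ∑ i, ⟪Pf, e i⟫_ℝ * ⟪e i, Pf⟫_ℝ :=
      (e.sum_inner_mul_inner Pf Pf).symm
    have h2 : ∀ i, ⟪Pf, e i⟫_ℝ = μ i * a i := by
      intro i; rw [real_inner_comm]; exact hinnerPf i
    rw [euclid_inner Pf Pf] at h1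
    calc ∑ x, ((transMatrix G r) *ᵥ f) x ^ 2 = ∑ x, Pf x * Pf x :=
          Finset.sum_congr rfl fun x _ => sq _
      _ = ∑ i, (μ i * a i) ^ 2 := by
          rw [h1]
          exact Finset.sum_congr rfl fun i _ => by rw [h2 i, hinnerPf i, sq]
  have hfnorm : ∑ x, f x ^ 2 = ∑ i, a i ^ 2 := by
    have h1 : ⟪F, F⟫_ℝ = ∑ i, ⟪F, e i⟫_ℝ * ⟪e i, F⟫_ℝ :=
      (e.sum_inner_mul_inner F F).symm
    have h2 : ∀ i, ⟪F, e i⟫_ℝ = a i := by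
      intro i; rw [real_inner_comm]; exact hinner i
    rw [euclid_inner F F] at h1
    calc ∑ x, f x ^ 2 = ∑ x, F x * F x :=
          Finset.sum_congr rfl fun x _ => sq _
      _ = ∑ i, a i ^ 2 := by
          rw [h1]
          exact Finset.sum_congr rfl fun i _ => by rw [h2 i, hinner i, sq]
  rw [hPfnorm, hfnorm, Finset.mul_sum]
  exact Finset.sum_le_sum fun i _ => key i





include hreg in
lemma deg_sum (A : Finset V) : ∑ u, (degIn G A u : ℝ) = (r : ℝ) * (A.card : ℝ) := by
  have h : ∀ u : V, degIn G A u = ∑ a ∈ A, if G.Adj u a then 1 else 0 := by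
    intro u
    rw [degIn, show G.neighborFinset u ∩ A = A.filter (fun a => G.Adj u a) from ?_,
      Finset.card_filter]
    ext a
    simp [SimpleGraph.mem_neighborFinset, and_comm]
  have hN : ∑ u, degIn G A u = r * A.card := by
    calc ∑ u, degIn G A u = ∑ u, ∑ a ∈ A, if G.Adj u a then 1 else 0 :=
          Finset.sum_congr rfl fun u _ => h u
      _ = ∑ a ∈ A, ∑ u, if G.Adj u a then 1 else 0 := Finset.sum_comm
      _ = ∑ a ∈ A, r := by
          refine Finset.sum_congr rfl fun a _ => ?_
          have h1 : ∑ u, (if G.Adj u a then 1 else 0) = ∑ u, (if G.Adj a u then 1 else 0) :=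
            Finset.sum_congr rfl fun u _ => if_congr (G.adj_comm u a) rfl rfl
          rw [h1, ← Finset.sum_filter, ← SimpleGraph.neighborFinset_eq_filter]
          simp only [Finset.sum_const, smul_eq_mul, mul_one]
          rw [G.card_neighborFinset_eq_degree, hreg a]
      _ = r * A.card := by rw [Finset.sum_const, smul_eq_mul, mul_comm]
  exact_mod_cast hN

lemma mulVec_indicator (A : Finset V) (u : V) :
    ((transMatrix G r) *ᵥ (fun y => if y ∈ A then (1:ℝ) else 0)) u
      = (degIn G A u : ℝ) / (r : ℝ) := by
  simp only [Matrix.mulVec, dotProduct, transMatrix, Matrix.of_apply]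
  have h : ∀ y : V, (if G.Adj u y then (r:ℝ)⁻¹ else 0) * (if y ∈ A then (1:ℝ) else 0)
      = if y ∈ G.neighborFinset u ∩ A then (r:ℝ)⁻¹ else 0 := by
    intro y
    by_cases h1 : G.Adj u y <;> by_cases h2 : y ∈ A <;>
      simp [h1, h2, SimpleGraph.mem_neighborFinset]
  rw [Finset.sum_congr rfl fun y _ => h y, Finset.sum_ite_mem, Finset.univ_inter,
    Finset.sum_const, nsmul_eq_mul, degIn, div_eq_mul_inv]

include hreg hr in
lemma sum_pInf_ge (hlam : secondEigen G r < 1) (A : Finset V) :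
    (A.card : ℝ) * (1 + (1 - secondEigen G r ^ 2) * (1 - (A.card : ℝ) / (Fintype.card V : ℝ)))
      ≤ ∑ u, pInf G r 2 A u := by
  classical
  rcases isEmpty_or_nonempty V with hE | hne
  · have hA : A = ∅ := Finset.eq_empty_of_isEmpty A
    simp [hA]
  set lam := secondEigen G r with hlamdef
  have hn : (0:ℝ) < (Fintype.card V : ℝ) := by exact_mod_cast Fintype.card_pos
  set n : ℝ := (Fintype.card V : ℝ) with hndef
  set α : ℝ := (A.card : ℝ) with hα
  set c : ℝ := α / n with hc
  set ind : V → ℝ := fun y => if y ∈ A then 1 else 0 with hind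
  set g : V → ℝ := fun y => ind y - c with hg
  have hsum_ind : ∑ y, ind y = α := by
    rw [hind]
    simp only []
    rw [Finset.sum_ite_mem, Finset.univ_inter, Finset.sum_const, nsmul_eq_mul, mul_one]
  have hsum_g : ∑ y, g y = 0 := by
    rw [hg]
    simp only []
    rw [Finset.sum_sub_distrib, hsum_ind, Finset.sum_const, nsmul_eq_mul, hc]
    field_simp
    rw [Finset.card_univ, ← hndef]; ring
  have hspec := spectral_bound G r hreg hr hlam g hsum_g
  -- compute ∑ g²
  have hgsq : ∑ y, g y ^ 2 = α - α ^ 2 / n := by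
    have : ∀ y, g y ^ 2 = ind y - 2 * c * ind y + c ^ 2 := by
      intro y
      rw [hg, hind]
      simp only []
      by_cases hy : y ∈ A <;> simp [hy] <;> ring
    rw [Finset.sum_congr rfl fun y _ => this y]
    rw [Finset.sum_add_distrib, Finset.sum_sub_distrib, hsum_ind, ← Finset.mul_sum, hsum_ind,
      Finset.sum_const, nsmul_eq_mul, hc]
    field_simp
    rw [Finset.card_univ, ← hndef]; ring
  -- compute P g
  have hPg : (transMatrix G r) *ᵥ g = fun u => (degIn G A u : ℝ) / (r:ℝ) - c := by
    have : g = ind - (fun _ => c) := funext fun y => rfl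
    rw [this, Matrix.mulVec_sub, transMatrix_mulVec_const G r hreg hr]
    funext u
    simp only [Pi.sub_apply]
    rw [mulVec_indicator G r A u]
  have hx : ∑ u, (degIn G A u : ℝ) / (r:ℝ) = α := by
    rw [← Finset.sum_div, deg_sum G r hreg A]
    field_simp
    exact hα.symm
  have hxsq : ∑ u, ((degIn G A u : ℝ) / (r:ℝ)) ^ 2
      ≤ lam ^ 2 * (α - α ^ 2 / n) + α ^ 2 / n := by
    have h1 : ∑ u, ((transMatrix G r) *ᵥ g) u ^ 2
        = ∑ u, ((degIn G A u : ℝ) / (r:ℝ)) ^ 2 - 2 * c * α + n * c ^ 2 := by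
      rw [hPg]
      have : ∀ u : V, ((degIn G A u : ℝ) / (r:ℝ) - c) ^ 2
          = ((degIn G A u : ℝ) / (r:ℝ)) ^ 2 - 2 * c * ((degIn G A u : ℝ) / (r:ℝ)) + c ^ 2 := by
        intro u; ring
      rw [Finset.sum_congr rfl fun u _ => this u, Finset.sum_add_distrib,
        Finset.sum_sub_distrib, ← Finset.mul_sum, hx, Finset.sum_const, nsmul_eq_mul,
        Finset.card_univ]
    rw [h1, hgsq] at hspec
    have hcn : n * c ^ 2 = α ^ 2 / n := by rw [hc]; field_simp
    have hca : 2 * c * α = 2 * (α ^ 2 / n) := by rw [hc]; field_simp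
    nlinarith [hspec]
  -- conclude
  have hpinf : ∀ u, pInf G r 2 A u
      = 2 * ((degIn G A u : ℝ) / (r:ℝ)) - ((degIn G A u : ℝ) / (r:ℝ)) ^ 2 := by
    intro u; rw [pInf]; ring
  rw [Finset.sum_congr rfl fun u _ => hpinf u, Finset.sum_sub_distrib, ← Finset.mul_sum, hx]
  have hgoal : α * (1 + (1 - lam ^ 2) * (1 - α / n))
      = 2 * α - (lam ^ 2 * (α - α ^ 2 / n) + α ^ 2 / n) := by
    field_simp
    ring
  rw [hgoal]
  linarith [hxsq]


end BIPSHelpers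



/-- Lemma 5 of the paper.  For a connected `r`-regular graph `G` on
`n` vertices with `λ < 1` and the BIPS process with source `v` and `k = 2`, for every
`A ⊆ V` with `v ∈ A`:  `E(|A_{t+1}| | A_t = A) ≥ |A|·(1 + (1-λ²)(1 - |A|/n))`. -/
theorem bips_expected_growth {V : Type*} [Fintype V] [DecidableEq V] (G : SimpleGraph V)
    [DecidableRel G.Adj] (r : ℕ) (hconn : G.Connected) (hreg : G.IsRegularOfDegree r)
    (hlam : secondEigen G r < 1) (v : V) (A : Finset V) (hv : v ∈ A) :
    (A.card : ℝ) *
        (1 + (1 - secondEigen G r ^ 2) * (1 - (A.card : ℝ) / (Fintype.card V : ℝ))) ≤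
      ∑ B : Finset V, bipsStep G r 2 v A B * (B.card : ℝ) := by
  classical
  rw [bips_expectation G r 2 v A]
  by_cases hcard : Fintype.card V = 1
  · obtain ⟨a, ha⟩ := Fintype.card_eq_one_iff.1 hcard
    have huniv : (Finset.univ : Finset V) = {v} := by
      ext x; simp [ha x, ha v]
    have hA : A = {v} := by
      apply Finset.Subset.antisymm
      · intro x hx
        rw [← huniv]; exact Finset.mem_univ x
      · exact Finset.singleton_subset_iff.2 hv
    have herase : Finset.univ.erase v = (∅ : Finset V) := by rw [huniv]; simp
    rw [herase, hA, hcard]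
    norm_num
  · have hr : 0 < r := by
      rcases Nat.eq_zero_or_pos r with hr0 | hr
      · exfalso
        apply hcard
        rw [Fintype.card_eq_one_iff]
        refine ⟨v, fun u => ?_⟩
        obtain ⟨p⟩ := hconn.preconnected u v
        cases p with
        | nil => rfl
        | cons h q =>
          have hd : 0 < G.degree u := (G.degree_pos_iff_exists_adj u).2 ⟨_, h⟩
          rw [hreg u, hr0] at hd
          exact absurd hd (lt_irrefl 0)
      · exact hr
    have hmain := sum_pInf_ge G r hreg hr hlam A
    have hsplit : ∑ u, pInf G r 2 A u
        = pInf G r 2 A v + ∑ u ∈ Finset.univ.erase v, pInf G r 2 A u :=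
      (Finset.add_sum_erase _ _ (Finset.mem_univ v)).symm
    have hle1 : pInf G r 2 A v ≤ 1 := by
      rw [pInf]
      nlinarith [sq_nonneg (1 - (degIn G A v : ℝ) / (r:ℝ))]
    linarith
end

section
/- There exist absolute constants C₀, c > 0 such that the following holds. Let G be a connected r-regular graph on n vertices with 1 − λ ≥ C₀·√((log n)/n), and consider the BIPS process on G with source v and parameter k = 2. Suppose that at some time t₀ the infected set satisfies |A_{t₀}| ≥ (9/10)·n. Then with probability at least 1 − c·n^{−5} there exists t with t₀ ≤ t ≤ t₀ + ⌈8·(log n)/(1 − λ)⌉ such that A_t = V. -/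
open Finset

namespace BIPSaux

open Finset

variable {V : Type*} [Fintype V] [DecidableEq V]

/-- Key product expansion for the product Bernoulli measure. -/
lemma sum_ite_prod (v : V) (x y : V → ℝ) :
    (∑ B : Finset V, if v ∈ B then
        ∏ u ∈ Finset.univ.erase v, (if u ∈ B then x u else y u) else 0)
      = ∏ u ∈ Finset.univ.erase v, (x u + y u) := by
  rw [Finset.prod_add, ← Finset.sum_filter]
  refine Finset.sum_nbij' (i := fun B => Finset.erase B v) (j := fun S => insert v S)
    ?_ ?_ ?_ ?_ ?_
  · intro B hB
    simp only [Finset.mem_powerset]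
    exact Finset.erase_subset_erase v (Finset.subset_univ B)
  · intro S hS
    simp only [Finset.mem_filter, Finset.mem_univ, true_and]
    exact Finset.mem_insert_self v S
  · intro B hB
    simp only [Finset.mem_filter] at hB
    exact Finset.insert_erase hB.2
  · intro S hS
    simp only [Finset.mem_powerset] at hS
    refine Finset.erase_insert ?_
    intro hv
    exact (Finset.mem_erase.mp (hS hv)).1 rfl
  · intro B hB
    simp only [Finset.mem_filter] at hB
    have hS : B.erase v ⊆ Finset.univ.erase v :=
      Finset.erase_subset_erase v (Finset.subset_univ B)
    calc ∏ u ∈ Finset.univ.erase v, (if u ∈ B then x u else y u)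
        = ∏ u ∈ (B.erase v) ∪ (Finset.univ.erase v \ B.erase v),
            (if u ∈ B then x u else y u) := by
          rw [Finset.union_sdiff_of_subset hS]
      _ = (∏ u ∈ B.erase v, (if u ∈ B then x u else y u)) *
            ∏ u ∈ Finset.univ.erase v \ B.erase v, (if u ∈ B then x u else y u) :=
          Finset.prod_union Finset.disjoint_sdiff
      _ = (∏ u ∈ B.erase v, x u) * ∏ u ∈ Finset.univ.erase v \ B.erase v, y u := by
          congr 1
          · refine Finset.prod_congr rfl fun u hu => ?_
            rw [if_pos (Finset.mem_of_mem_erase hu)]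
          · refine Finset.prod_congr rfl fun u hu => ?_
            rw [Finset.mem_sdiff, Finset.mem_erase] at hu
            rw [if_neg]
            intro huB
            exact hu.2 (Finset.mem_erase.mpr ⟨hu.1.1, huB⟩)

variable (G : SimpleGraph V) [DecidableRel G.Adj] {r : ℕ} (v : V)

lemma degIn_le (hreg : G.IsRegularOfDegree r) (A : Finset V) (u : V) :
    degIn G A u ≤ r := by
  calc (G.neighborFinset u ∩ A).card ≤ (G.neighborFinset u).card :=
        Finset.card_le_card Finset.inter_subset_left
    _ = r := by rw [G.card_neighborFinset_eq_degree]; exact hreg u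

lemma ratio_mem (hreg : G.IsRegularOfDegree r) (A : Finset V) (u : V) :
    0 ≤ (degIn G A u : ℝ) / (r : ℝ) ∧ (degIn G A u : ℝ) / (r : ℝ) ≤ 1 := by
  rcases Nat.eq_zero_or_pos r with hr | hr
  · subst hr
    simp
  · constructor
    · positivity
    · rw [div_le_one (by exact_mod_cast hr)]
      exact_mod_cast degIn_le G hreg A u

lemma pInf_mem (hreg : G.IsRegularOfDegree r) (A : Finset V) (u : V) :
    0 ≤ pInf G r 2 A u ∧ pInf G r 2 A u ≤ 1 := by
  obtain ⟨h0, h1⟩ := ratio_mem G hreg A u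
  unfold pInf
  constructor <;> nlinarith [sq_nonneg (1 - (degIn G A u : ℝ) / (r : ℝ))]

lemma bipsStep_nonneg (hreg : G.IsRegularOfDegree r) (A B : Finset V) :
    0 ≤ bipsStep G r 2 v A B := by
  unfold bipsStep
  split
  · refine Finset.prod_nonneg fun u _ => ?_
    obtain ⟨h0, h1⟩ := pInf_mem G hreg A u
    split <;> linarith
  · exact le_refl 0

lemma bipsStep_sum (hreg : G.IsRegularOfDegree r) (A : Finset V) :
    ∑ B : Finset V, bipsStep G r 2 v A B = 1 := by
  unfold bipsStep
  rw [sum_ite_prod v (fun u => pInf G r 2 A u) (fun u => 1 - pInf G r 2 A u)]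
  simp


lemma bipsStep_marginal (hreg : G.IsRegularOfDegree r) (A : Finset V) (u₀ : V)
    (hu₀ : u₀ ∈ Finset.univ.erase v) :
    ∑ B : Finset V, bipsStep G r 2 v A B * (if u₀ ∈ B then (0:ℝ) else 1)
      = 1 - pInf G r 2 A u₀ := by
  have key : ∀ B : Finset V, bipsStep G r 2 v A B * (if u₀ ∈ B then (0:ℝ) else 1)
      = if v ∈ B then
          ∏ u ∈ Finset.univ.erase v,
            (if u ∈ B then (if u = u₀ then (0:ℝ) else pInf G r 2 A u)
              else (1 - pInf G r 2 A u)) else 0 := by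
    intro B
    unfold bipsStep
    by_cases hv : v ∈ B
    · rw [if_pos hv, if_pos hv]
      rw [← Finset.mul_prod_erase (Finset.univ.erase v)
        (fun u => if u ∈ B then pInf G r 2 A u else 1 - pInf G r 2 A u) hu₀,
        ← Finset.mul_prod_erase (Finset.univ.erase v)
        (fun u => if u ∈ B then (if u = u₀ then (0:ℝ) else pInf G r 2 A u)
          else (1 - pInf G r 2 A u)) hu₀]
      rw [mul_comm, ← mul_assoc]
      congr 1
      · by_cases h : u₀ ∈ B <;> simp [h]
      · refine Finset.prod_congr rfl fun u hu => ?_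
        have : u ≠ u₀ := (Finset.mem_erase.mp hu).1
        simp [this]
    · simp [hv]
  rw [Finset.sum_congr rfl fun B _ => key B]
  rw [sum_ite_prod v _ _]
  rw [← Finset.mul_prod_erase (Finset.univ.erase v)
    (fun u => (if u = u₀ then (0:ℝ) else pInf G r 2 A u) + (1 - pInf G r 2 A u)) hu₀]
  rw [if_pos rfl, zero_add]
  have : ∏ u ∈ (Finset.univ.erase v).erase u₀,
      ((if u = u₀ then (0:ℝ) else pInf G r 2 A u) + (1 - pInf G r 2 A u)) = 1 := by
    refine Finset.prod_eq_one fun u hu => ?_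
    have : u ≠ u₀ := (Finset.mem_erase.mp hu).1
    simp [this]
  rw [this, mul_one]

lemma card_compl_eq_sum (B : Finset V) (hv : v ∈ B) :
    ((Finset.univ \ B).card : ℝ)
      = ∑ u ∈ Finset.univ.erase v, (if u ∈ B then (0:ℝ) else 1) := by
  have : ∑ u ∈ Finset.univ.erase v, (if u ∈ B then (0:ℝ) else 1)
      = ∑ u ∈ Finset.univ.erase v, (if u ∉ B then (1:ℝ) else 0) := by
    refine Finset.sum_congr rfl fun u _ => ?_
    by_cases h : u ∈ B <;> simp [h]
  rw [this, Finset.sum_boole]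
  congr 2
  ext u
  simp only [Finset.mem_filter, Finset.mem_erase, Finset.mem_sdiff, Finset.mem_univ,
    true_and, and_true]
  constructor
  · intro h; exact ⟨fun he => h (he ▸ hv), h⟩
  · intro h; exact h.2

lemma bipsStep_expect (hreg : G.IsRegularOfDegree r) (A : Finset V) :
    ∑ B : Finset V, bipsStep G r 2 v A B * ((Finset.univ \ B).card : ℝ)
      = ∑ u ∈ Finset.univ.erase v, (1 - pInf G r 2 A u) := by
  have key : ∀ B : Finset V, bipsStep G r 2 v A B * ((Finset.univ \ B).card : ℝ)
      = ∑ u ∈ Finset.univ.erase v, bipsStep G r 2 v A B * (if u ∈ B then (0:ℝ) else 1) := by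
    intro B
    by_cases hv : v ∈ B
    · rw [← Finset.mul_sum, card_compl_eq_sum v B hv]
    · simp [bipsStep, hv]
  rw [Finset.sum_congr rfl fun B _ => key B, Finset.sum_comm]
  exact Finset.sum_congr rfl fun u hu => bipsStep_marginal G v hreg A u hu

lemma bipsStep_mgf (hreg : G.IsRegularOfDegree r) (A : Finset V) (s : ℝ) :
    ∑ B : Finset V, bipsStep G r 2 v A B * Real.exp (s * ((Finset.univ \ B).card : ℝ))
      = ∏ u ∈ Finset.univ.erase v,
          (pInf G r 2 A u + (1 - pInf G r 2 A u) * Real.exp s) := by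
  have key : ∀ B : Finset V,
      bipsStep G r 2 v A B * Real.exp (s * ((Finset.univ \ B).card : ℝ))
      = if v ∈ B then
          ∏ u ∈ Finset.univ.erase v,
            (if u ∈ B then pInf G r 2 A u else (1 - pInf G r 2 A u) * Real.exp s)
        else 0 := by
    intro B
    unfold bipsStep
    by_cases hv : v ∈ B
    · rw [if_pos hv, if_pos hv, card_compl_eq_sum v B hv, Finset.mul_sum, Real.exp_sum,
        ← Finset.prod_mul_distrib]
      refine Finset.prod_congr rfl fun u _ => ?_
      by_cases h : u ∈ B <;> simp [h]
    · simp [hv]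
  rw [Finset.sum_congr rfl fun B _ => key B, sum_ite_prod v _ _]

lemma bipsStep_chernoff (hreg : G.IsRegularOfDegree r) (A : Finset V) {s m : ℝ}
    (hs : 0 ≤ s) :
    ∑ B : Finset V, bipsStep G r 2 v A B * (if ((Finset.univ \ B).card : ℝ) ≤ m then (0:ℝ) else 1)
      ≤ Real.exp ((Real.exp s - 1) * (∑ u ∈ Finset.univ.erase v, (1 - pInf G r 2 A u)) - s * m) := by
  have hexp1 : (1:ℝ) ≤ Real.exp s := by
    rw [← Real.exp_zero]; exact Real.exp_le_exp.mpr hs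
  have step1 : ∑ B : Finset V, bipsStep G r 2 v A B *
      (if ((Finset.univ \ B).card : ℝ) ≤ m then (0:ℝ) else 1)
      ≤ ∑ B : Finset V, bipsStep G r 2 v A B *
        (Real.exp (s * ((Finset.univ \ B).card : ℝ)) * Real.exp (-(s * m))) := by
    refine Finset.sum_le_sum fun B _ => ?_
    refine mul_le_mul_of_nonneg_left ?_ (bipsStep_nonneg G v hreg A B)
    rw [← Real.exp_add]
    by_cases h : ((Finset.univ \ B).card : ℝ) ≤ m
    · rw [if_pos h]; positivity
    · rw [if_neg h]
      push_neg at h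
      rw [← Real.exp_zero]
      apply Real.exp_le_exp.mpr
      nlinarith
  have step2 : ∑ B : Finset V, bipsStep G r 2 v A B *
      (Real.exp (s * ((Finset.univ \ B).card : ℝ)) * Real.exp (-(s * m)))
      = Real.exp (-(s * m)) *
        ∏ u ∈ Finset.univ.erase v, (pInf G r 2 A u + (1 - pInf G r 2 A u) * Real.exp s) := by
    rw [← bipsStep_mgf G v hreg A s, Finset.mul_sum]
    refine Finset.sum_congr rfl fun B _ => by ring
  have step3 : ∏ u ∈ Finset.univ.erase v, (pInf G r 2 A u + (1 - pInf G r 2 A u) * Real.exp s)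
      ≤ Real.exp ((Real.exp s - 1) * ∑ u ∈ Finset.univ.erase v, (1 - pInf G r 2 A u)) := by
    rw [Finset.mul_sum, Real.exp_sum]
    refine Finset.prod_le_prod (fun u _ => ?_) (fun u _ => ?_)
    · obtain ⟨h0, h1⟩ := pInf_mem G hreg A u
      nlinarith
    · obtain ⟨h0, h1⟩ := pInf_mem G hreg A u
      have := Real.add_one_le_exp ((Real.exp s - 1) * (1 - pInf G r 2 A u))
      nlinarith
  calc ∑ B : Finset V, bipsStep G r 2 v A B *
      (if ((Finset.univ \ B).card : ℝ) ≤ m then (0:ℝ) else 1)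
      ≤ Real.exp (-(s * m)) *
        ∏ u ∈ Finset.univ.erase v, (pInf G r 2 A u + (1 - pInf G r 2 A u) * Real.exp s) := by
        rw [← step2]; exact step1
    _ ≤ Real.exp (-(s * m)) *
        Real.exp ((Real.exp s - 1) * ∑ u ∈ Finset.univ.erase v, (1 - pInf G r 2 A u)) := by
        exact mul_le_mul_of_nonneg_left step3 (Real.exp_nonneg _)
    _ = Real.exp ((Real.exp s - 1) * (∑ u ∈ Finset.univ.erase v, (1 - pInf G r 2 A u)) - s * m) := by
        rw [← Real.exp_add]; ring_nf


/-! ### Spectral lemmas -/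

lemma transMatrix_symm_entry (x y : V) : transMatrix G r x y = transMatrix G r y x := by
  simp only [transMatrix, Matrix.of_apply, G.adj_comm]

lemma transMatrix_isHermitian : (transMatrix G r).IsHermitian := by
  ext x y
  simp only [Matrix.conjTranspose_apply, star_trivial]
  exact transMatrix_symm_entry G y x

lemma transMatrix_rowsum (hreg : G.IsRegularOfDegree r) (hr : 0 < r) (x : V) :
    ∑ y, transMatrix G r x y = 1 := by
  have : ∑ y, transMatrix G r x y = ((G.neighborFinset x).card : ℝ) * (r : ℝ)⁻¹ := by
    simp only [transMatrix, Matrix.of_apply]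
    rw [Finset.sum_ite, Finset.sum_const_zero, add_zero, Finset.sum_const, nsmul_eq_mul]
    congr 2
    rw [SimpleGraph.neighborFinset_eq_filter]
  rw [this, G.card_neighborFinset_eq_degree, hreg x]
  field_simp

lemma transMatrix_colsum (hreg : G.IsRegularOfDegree r) (hr : 0 < r) (f : V → ℝ) :
    ∑ x, (transMatrix G r).mulVec f x = ∑ y, f y := by
  simp only [Matrix.mulVec, dotProduct]
  rw [Finset.sum_comm]
  refine Finset.sum_congr rfl fun y _ => ?_
  rw [← Finset.sum_mul]
  rw [show ∑ x, transMatrix G r x y = 1 from ?_, one_mul]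
  rw [Finset.sum_congr rfl fun x _ => transMatrix_symm_entry G x y]
  exact transMatrix_rowsum G hreg hr y

lemma transMatrix_mulVec_const (hreg : G.IsRegularOfDegree r) (hr : 0 < r) (c : ℝ) :
    (transMatrix G r).mulVec (fun _ => c) = fun _ => c := by
  funext x
  simp only [Matrix.mulVec, dotProduct]
  rw [← Finset.sum_mul, transMatrix_rowsum G hreg hr x, one_mul]

lemma secondEigen_nonneg : 0 ≤ secondEigen G r := by
  apply Real.sSup_nonneg
  rintro y ⟨μ, f, rfl, -, -, -⟩
  exact abs_nonneg μ

lemma secondEigen_bddAbove (hreg : G.IsRegularOfDegree r) (hr : 0 < r) :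
    BddAbove {y : ℝ | ∃ (μ : ℝ) (f : V → ℝ), y = |μ| ∧ f ≠ 0 ∧ (∑ x, f x) = 0 ∧
      (transMatrix G r).mulVec f = μ • f} := by
  refine ⟨1, ?_⟩
  rintro y ⟨μ, f, rfl, hf, -, heig⟩
  have hne : (Finset.univ : Finset V).Nonempty := by
    by_contra h
    apply hf
    funext x
    exact absurd (Finset.mem_univ x) (fun hx => h ⟨x, hx⟩)
  obtain ⟨x₀, -, hx₀⟩ := Finset.exists_max_image Finset.univ (fun x => |f x|) hne
  have hfx₀ : 0 < |f x₀| := by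
    rcases Function.ne_iff.mp hf with ⟨x, hx⟩
    calc (0:ℝ) < |f x| := abs_pos.mpr hx
      _ ≤ |f x₀| := hx₀ x (Finset.mem_univ x)
  have hmv : |μ| * |f x₀| ≤ |f x₀| := by
    have h1 : (transMatrix G r).mulVec f x₀ = μ * f x₀ := by
      rw [heig]; rfl
    have h2 : |μ * f x₀| ≤ |f x₀| := by
      rw [← h1]
      calc |(transMatrix G r).mulVec f x₀| = |∑ y, transMatrix G r x₀ y * f y| := rfl
        _ ≤ ∑ y, |transMatrix G r x₀ y * f y| := Finset.abs_sum_le_sum_abs _ _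
        _ ≤ ∑ y, transMatrix G r x₀ y * |f x₀| := by
            refine Finset.sum_le_sum fun y _ => ?_
            rw [abs_mul]
            have hnn : 0 ≤ transMatrix G r x₀ y := by
              simp only [transMatrix, Matrix.of_apply]
              split <;> positivity
            rw [abs_of_nonneg hnn]
            exact mul_le_mul_of_nonneg_left (hx₀ y (Finset.mem_univ y)) hnn
        _ = |f x₀| := by rw [← Finset.sum_mul, transMatrix_rowsum G hreg hr x₀, one_mul]
    rw [abs_mul] at h2
    exact h2
  nlinarith

lemma spectral_bound (hreg : G.IsRegularOfDegree r) (hr : 0 < r)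
    (hn : 0 < Fintype.card V) (hlam : secondEigen G r < 1)
    (h : V → ℝ) (hsum : ∑ x, h x = 0) :
    ∑ x, ((transMatrix G r).mulVec h x)^2 ≤ (secondEigen G r)^2 * ∑ x, (h x)^2 := by
  classical
  set P := transMatrix G r with hP_def
  have hP : P.IsHermitian := transMatrix_isHermitian G
  set b := hP.eigenvectorBasis with hb_def
  set μ := hP.eigenvalues with hμ_def
  -- inner product formula on EuclideanSpace ℝ V
  have hinner : ∀ a c : EuclideanSpace ℝ V, (inner ℝ a c : ℝ) = ∑ x, a x * c x := by
    intro a c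
    simp [PiLp.inner_apply, RCLike.inner_apply, starRingEnd_apply]
    exact Finset.sum_congr rfl fun x _ => mul_comm _ _
  set h' : EuclideanSpace ℝ V := (WithLp.equiv 2 (V → ℝ)).symm h with hh'
  set Ph' : EuclideanSpace ℝ V := (WithLp.equiv 2 (V → ℝ)).symm (P.mulVec h) with hPh'
  have happly : ∀ x, h' x = h x := fun _ => rfl
  have hPapply : ∀ x, Ph' x = P.mulVec h x := fun _ => rfl
  -- eigen equation pointwise
  have heig : ∀ i x, P.mulVec (fun z => b i z) x = μ i * b i x := by
    intro i x
    have := hP.mulVec_eigenvectorBasis i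
    have := congrFun this x
    simpa using this
  -- key coefficient identity
  have key : ∀ i, b.repr Ph' i = μ i * b.repr h' i := by
    intro i
    rw [OrthonormalBasis.repr_apply_apply, OrthonormalBasis.repr_apply_apply,
      hinner, hinner]
    have : ∀ x, Ph' x = ∑ y, P x y * h y := fun x => rfl
    calc ∑ x, b i x * Ph' x = ∑ x, ∑ y, b i x * (P x y * h y) := by
          refine Finset.sum_congr rfl fun x _ => ?_
          rw [this x, Finset.mul_sum]
      _ = ∑ y, ∑ x, b i x * (P x y * h y) := Finset.sum_comm
      _ = ∑ y, (∑ x, P y x * b i x) * h y := by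
          refine Finset.sum_congr rfl fun y _ => ?_
          rw [Finset.sum_mul]
          refine Finset.sum_congr rfl fun x _ => ?_
          have hsymm : P x y = P y x := transMatrix_symm_entry G x y
          rw [hsymm]
          ring
      _ = ∑ y, (μ i * b i y) * h y := by
          refine Finset.sum_congr rfl fun y _ => ?_
          congr 1
          exact heig i y
      _ = μ i * ∑ y, b i y * h' y := by
          rw [Finset.mul_sum]
          refine Finset.sum_congr rfl fun y _ => ?_
          rw [happly]; ring
  -- Parseval
  have parseval : ∀ w : EuclideanSpace ℝ V, ∑ x, (w x)^2 = ∑ i, (b.repr w i)^2 := by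
    intro w
    have h1 : (inner ℝ w w : ℝ) = ∑ x, w x * w x := hinner w w
    have h2 : (inner ℝ (b.repr w) (b.repr w) : ℝ) = ∑ i, b.repr w i * b.repr w i :=
      hinner _ _
    have h3 : (inner ℝ (b.repr w) (b.repr w) : ℝ) = (inner ℝ w w : ℝ) :=
      b.repr.inner_map_map w w
    calc ∑ x, (w x)^2 = ∑ x, w x * w x := by simp [sq]
      _ = ∑ i, b.repr w i * b.repr w i := by rw [← h1, ← h3, h2]
      _ = ∑ i, (b.repr w i)^2 := by simp [sq]
  -- coefficient bound
  have coeff : ∀ i, (μ i * b.repr h' i)^2 ≤ (secondEigen G r)^2 * (b.repr h' i)^2 := by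
    intro i
    by_cases hc : b.repr h' i = 0
    · simp [hc]
    have habs : |μ i| ≤ secondEigen G r := by
      have hsum_eig : (μ i - 1) * (∑ x, b i x) = 0 := by
        have h1 : ∑ x, P.mulVec (fun z => b i z) x = ∑ x, b i x :=
          transMatrix_colsum G hreg hr _
        have h2 : ∑ x, P.mulVec (fun z => b i z) x = μ i * ∑ x, b i x := by
          rw [Finset.sum_congr rfl fun x _ => heig i x, ← Finset.mul_sum]
        rw [h2] at h1
        linarith [h1]
      by_cases hμ1 : μ i = 1
      · exfalso
        set c0 : ℝ := (∑ x, b i x) / (Fintype.card V) with hc0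
        set w : V → ℝ := fun x => b i x - c0 with hw_def
        have hw_sum : ∑ x, w x = 0 := by
          simp only [hw_def]
          rw [Finset.sum_sub_distrib, Finset.sum_const, Finset.card_univ, nsmul_eq_mul,
            hc0]
          field_simp
          ring
        have hw_eig : P.mulVec w = (1:ℝ) • w := by
          funext x
          have : P.mulVec w x = P.mulVec (fun z => b i z) x - P.mulVec (fun _ => c0) x := by
            have : w = (fun z => b i z) - (fun _ => c0) := by funext z; simp [hw_def]
            rw [this, Matrix.mulVec_sub]
            rfl
          rw [this, heig i x, hμ1, transMatrix_mulVec_const G hreg hr c0]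
          simp [hw_def]
        by_cases hw0 : w = 0
        · -- b i is constant, so repr h' i = 0, contradiction
          apply hc
          have hbconst : ∀ x, b i x = c0 := by
            intro x
            have := congrFun hw0 x
            simp only [hw_def, Pi.zero_apply] at this
            linarith
          rw [OrthonormalBasis.repr_apply_apply, hinner]
          calc ∑ x, b i x * h' x = ∑ x, c0 * h x := by
                refine Finset.sum_congr rfl fun x _ => ?_
                rw [hbconst x, happly]
            _ = c0 * ∑ x, h x := by rw [Finset.mul_sum]
            _ = 0 := by rw [hsum]; ring
        · have hmem : (1:ℝ) ∈ {y : ℝ | ∃ (μ : ℝ) (f : V → ℝ), y = |μ| ∧ f ≠ 0 ∧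
              (∑ x, f x) = 0 ∧ (transMatrix G r).mulVec f = μ • f} :=
            ⟨1, w, abs_one.symm, hw0, hw_sum, hw_eig⟩
          have := le_csSup (secondEigen_bddAbove G hreg hr) hmem
          rw [secondEigen] at hlam
          linarith
      · -- μ i ≠ 1 : sum of b i is zero
        have hbsum : ∑ x, b i x = 0 := by
          rcases mul_eq_zero.mp hsum_eig with h | h
          · exact absurd (by linarith : μ i = 1) hμ1
          · exact h
        have hbne : (fun z => b i z) ≠ 0 := by
          intro h0
          apply hc
          rw [OrthonormalBasis.repr_apply_apply, hinner]
          refine Finset.sum_eq_zero fun x _ => ?_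
          have := congrFun h0 x
          simp only [Pi.zero_apply] at this
          rw [this, zero_mul]
        have hmem : |μ i| ∈ {y : ℝ | ∃ (μ : ℝ) (f : V → ℝ), y = |μ| ∧ f ≠ 0 ∧
            (∑ x, f x) = 0 ∧ (transMatrix G r).mulVec f = μ • f} := by
          refine ⟨μ i, fun z => b i z, rfl, hbne, hbsum, ?_⟩
          funext x
          rw [heig i x]
          rfl
        exact le_csSup (secondEigen_bddAbove G hreg hr) hmem
    have h1 : (μ i)^2 ≤ (secondEigen G r)^2 := by
      have := pow_le_pow_left₀ (abs_nonneg (μ i)) habs 2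
      rwa [sq_abs] at this
    nlinarith [sq_nonneg (b.repr h' i)]
  calc ∑ x, (P.mulVec h x)^2 = ∑ x, (Ph' x)^2 := rfl
    _ = ∑ i, (b.repr Ph' i)^2 := parseval Ph'
    _ = ∑ i, (μ i * b.repr h' i)^2 := by
        refine Finset.sum_congr rfl fun i _ => ?_
        rw [key i]
    _ ≤ ∑ i, (secondEigen G r)^2 * (b.repr h' i)^2 := Finset.sum_le_sum fun i _ => coeff i
    _ = (secondEigen G r)^2 * ∑ i, (b.repr h' i)^2 := by rw [Finset.mul_sum]
    _ = (secondEigen G r)^2 * ∑ x, (h x)^2 := by rw [← parseval h']; rfl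


/-! ### Mixing lemma -/

lemma one_sub_pInf_eq (hreg : G.IsRegularOfDegree r) (hr : 0 < r) (A : Finset V) (u : V) :
    1 - pInf G r 2 A u = (((transMatrix G r).mulVec
      (fun y => if y ∈ Finset.univ \ A then (1:ℝ) else 0)) u)^2 := by
  have hmv : (transMatrix G r).mulVec (fun y => if y ∈ Finset.univ \ A then (1:ℝ) else 0) u
      = (degIn G (Finset.univ \ A) u : ℝ) * (r:ℝ)⁻¹ := by
    simp only [Matrix.mulVec, dotProduct, transMatrix, Matrix.of_apply]
    have : ∀ y : V, (if G.Adj u y then (r:ℝ)⁻¹ else 0) * (if y ∈ Finset.univ \ A then (1:ℝ) else 0)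
        = if y ∈ G.neighborFinset u ∩ (Finset.univ \ A) then (r:ℝ)⁻¹ else 0 := by
      intro y
      by_cases h1 : G.Adj u y <;> by_cases h2 : y ∈ Finset.univ \ A <;>
        simp [h1, h2, SimpleGraph.mem_neighborFinset]
    rw [Finset.sum_congr rfl fun y _ => this y, Finset.sum_ite_mem, Finset.univ_inter,
      Finset.sum_const, nsmul_eq_mul]
    rfl
  have hr0 := hr
  · have hsplit : degIn G A u + degIn G (Finset.univ \ A) u = r := by
      unfold degIn
      rw [← Finset.card_union_of_disjoint]
      · have : G.neighborFinset u ∩ A ∪ G.neighborFinset u ∩ (Finset.univ \ A)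
            = G.neighborFinset u := by
          ext z
          simp only [Finset.mem_union, Finset.mem_inter, Finset.mem_sdiff, Finset.mem_univ,
            true_and]
          tauto
        rw [this, G.card_neighborFinset_eq_degree]
        exact hreg u
      · refine Finset.disjoint_left.mpr fun z hz1 hz2 => ?_
        simp only [Finset.mem_inter, Finset.mem_sdiff, Finset.mem_univ, true_and] at hz1 hz2
        exact hz2.2 hz1.2
    rw [hmv]
    have hrne : (r:ℝ) ≠ 0 := by exact_mod_cast hr0.ne'
    have : (degIn G (Finset.univ \ A) u : ℝ) = r - degIn G A u := by
      have : (degIn G A u : ℝ) + (degIn G (Finset.univ \ A) u : ℝ) = r := by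
        exact_mod_cast hsplit
      linarith
    rw [this]
    unfold pInf
    rw [show ((r:ℝ) - (degIn G A u:ℝ)) * (r:ℝ)⁻¹ = 1 - (degIn G A u:ℝ)/(r:ℝ) by
      field_simp]
    ring

lemma mean_bound (hreg : G.IsRegularOfDegree r) (hr : 0 < r)
    (hn : 0 < Fintype.card V) (hlam : secondEigen G r < 1) (A : Finset V) :
    ∑ u ∈ Finset.univ.erase v, (1 - pInf G r 2 A u)
      ≤ ((Finset.univ \ A).card : ℝ) *
        (((Finset.univ \ A).card : ℝ) / (Fintype.card V : ℝ)
          + (secondEigen G r)^2 * (1 - ((Finset.univ \ A).card : ℝ) / (Fintype.card V : ℝ))) := by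
  classical
  set n' : ℝ := (Fintype.card V : ℝ) with hn'
  have hn'pos : 0 < n' := by rw [hn']; exact_mod_cast hn
  set X : ℝ := ((Finset.univ \ A).card : ℝ) with hX
  set f : V → ℝ := fun y => if y ∈ Finset.univ \ A then (1:ℝ) else 0 with hf
  have hsumf : ∑ x, f x = X := by
    simp only [hf]
    rw [Finset.sum_ite_mem, Finset.univ_inter, Finset.sum_const, nsmul_eq_mul, mul_one]
  set β : ℝ := X / n' with hβ
  set g : V → ℝ := fun x => f x - β with hg
  have hsumg : ∑ x, g x = 0 := by
    simp only [hg]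
    rw [Finset.sum_sub_distrib, hsumf, Finset.sum_const, Finset.card_univ, nsmul_eq_mul]
    rw [hβ]
    field_simp
    simp [hn']
  have hsumg2 : ∑ x, (g x)^2 = X * (1 - β) := by
    simp only [hg]
    have expand : ∀ x, (f x - β)^2 = (f x)^2 - 2*β*(f x) + β^2 := fun x => by ring
    rw [Finset.sum_congr rfl fun x _ => expand x]
    have hf2 : ∑ x, (f x)^2 = X := by
      rw [← hsumf]
      refine Finset.sum_congr rfl fun x _ => ?_
      simp only [hf]
      split <;> norm_num
    rw [Finset.sum_add_distrib, Finset.sum_sub_distrib, hf2, ← Finset.mul_sum, hsumf,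
      Finset.sum_const, Finset.card_univ, nsmul_eq_mul]
    have : n' * β = X := by rw [hβ]; field_simp
    nlinarith [this]
  have hdecomp : ∀ u, (transMatrix G r).mulVec f u = (transMatrix G r).mulVec g u + β := by
    intro u
    have : f = fun x => g x + β := by funext x; simp [hg]
    rw [this]
    have : (fun x => g x + β) = g + (fun _ => β) := rfl
    rw [this, Matrix.mulVec_add]
    simp [transMatrix_mulVec_const G hreg hr β]
  have hcol : ∑ u, (transMatrix G r).mulVec g u = 0 := by
    rw [transMatrix_colsum G hreg hr g, hsumg]
  have hPg : ∑ u, ((transMatrix G r).mulVec g u)^2 ≤ (secondEigen G r)^2 * (X * (1 - β)) := by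
    have := spectral_bound G hreg hr hn hlam g hsumg
    rwa [hsumg2] at this
  have main : ∑ u, ((transMatrix G r).mulVec f u)^2 ≤ β * X + (secondEigen G r)^2 * (X * (1 - β)) := by
    have expand : ∀ u, ((transMatrix G r).mulVec f u)^2
        = ((transMatrix G r).mulVec g u)^2 + 2*β*((transMatrix G r).mulVec g u) + β^2 := by
      intro u
      rw [hdecomp u]
      ring
    rw [Finset.sum_congr rfl fun u _ => expand u, Finset.sum_add_distrib,
      Finset.sum_add_distrib, ← Finset.mul_sum, hcol, Finset.sum_const, Finset.card_univ,
      nsmul_eq_mul]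
    have hβX : n' * β^2 = β * X := by rw [hβ]; field_simp
    nlinarith [hPg]
  calc ∑ u ∈ Finset.univ.erase v, (1 - pInf G r 2 A u)
      ≤ ∑ u, (1 - pInf G r 2 A u) := by
        refine Finset.sum_le_sum_of_subset_of_nonneg (Finset.subset_univ _) fun u _ _ => ?_
        obtain ⟨h0, h1⟩ := pInf_mem G hreg A u
        linarith
    _ = ∑ u, ((transMatrix G r).mulVec f u)^2 :=
        Finset.sum_congr rfl fun u _ => one_sub_pInf_eq G hreg hr A u
    _ ≤ β * X + (secondEigen G r)^2 * (X * (1 - β)) := main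
    _ = X * (β + (secondEigen G r)^2 * (1 - β)) := by ring

lemma mean_contract (hreg : G.IsRegularOfDegree r) (hr : 0 < r)
    (hn : 0 < Fintype.card V) (hlam : secondEigen G r < 1) (hlam0 : 0 ≤ secondEigen G r)
    (A : Finset V)
    (hgood : ((Finset.univ \ A).card : ℝ) ≤ (Fintype.card V : ℝ) / 10) :
    ∑ u ∈ Finset.univ.erase v, (1 - pInf G r 2 A u)
      ≤ (1 - (9/10) * (1 - secondEigen G r)) * ((Finset.univ \ A).card : ℝ) := by
  have h := mean_bound G v hreg hr hn hlam A
  set lam := secondEigen G r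
  set n' : ℝ := (Fintype.card V : ℝ)
  set X : ℝ := ((Finset.univ \ A).card : ℝ)
  have hn'pos : 0 < n' := by simp only [n']; exact_mod_cast hn
  have hX0 : 0 ≤ X := Nat.cast_nonneg _
  have hβ : X / n' ≤ 1/10 := by
    rw [div_le_div_iff₀ hn'pos (by norm_num)]
    linarith
  have hβ0 : 0 ≤ X / n' := by positivity
  have hfactor : X / n' + lam^2 * (1 - X / n') ≤ 1 - (9/10) * (1 - lam) := by
    have h1 : (0:ℝ) ≤ 1 - lam^2 := by nlinarith
    have h2 : (0:ℝ) ≤ 1/10 - X/n' := by linarith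
    have h3 : (0:ℝ) ≤ lam * (1 - lam) := mul_nonneg hlam0 (by linarith)
    nlinarith [mul_nonneg h1 h2]
  calc ∑ u ∈ Finset.univ.erase v, (1 - pInf G r 2 A u)
      ≤ X * (X / n' + lam^2 * (1 - X / n')) := h
    _ ≤ X * (1 - (9/10) * (1 - lam)) := mul_le_mul_of_nonneg_left hfactor hX0
    _ = (1 - (9/10) * (1 - lam)) * X := by ring


/-! ### Trajectory machinery (abstract Markov chain on `Finset V`) -/

section Traj

variable (step : Finset V → Finset V → ℝ) (A₀ : Finset V)

lemma sum_snoc (T : ℕ) (f : (Fin (T+2) → Finset V) → ℝ) :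
    ∑ ω : Fin (T+2) → Finset V, f ω
      = ∑ ω' : Fin (T+1) → Finset V, ∑ B : Finset V, f (Fin.snoc ω' B) := by
  rw [← Equiv.sum_comp (Fin.snocEquiv (fun _ => Finset V)) f]
  rw [Fintype.sum_prod_type]
  rw [Finset.sum_comm]
  rfl

lemma trajProb_snoc (T : ℕ) (ω' : Fin (T+1) → Finset V) (B : Finset V) :
    trajProb step A₀ (T+1) (Fin.snoc ω' B)
      = trajProb step A₀ T ω' * step (ω' (Fin.last T)) B := by
  unfold trajProb
  have h0 : (Fin.snoc ω' B : Fin (T+2) → Finset V) 0 = ω' 0 := by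
    rw [show (0 : Fin (T+2)) = Fin.castSucc 0 from rfl, Fin.snoc_castSucc]
  rw [h0]
  rw [Fin.prod_univ_castSucc
    (fun i : Fin (T+1) => step ((Fin.snoc ω' B : Fin (T+2) → Finset V) i.castSucc)
      ((Fin.snoc ω' B : Fin (T+2) → Finset V) i.succ))]
  have hlast : step ((Fin.snoc ω' B : Fin (T+2) → Finset V) (Fin.last T).castSucc)
      ((Fin.snoc ω' B : Fin (T+2) → Finset V) (Fin.last T).succ)
      = step (ω' (Fin.last T)) B := by
    rw [Fin.snoc_castSucc, Fin.succ_last, Fin.snoc_last]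
  have hmid : ∀ i : Fin T,
      step ((Fin.snoc ω' B : Fin (T+2) → Finset V) (i.castSucc).castSucc)
        ((Fin.snoc ω' B : Fin (T+2) → Finset V) (i.castSucc).succ)
      = step (ω' i.castSucc) (ω' i.succ) := by
    intro i
    rw [Fin.snoc_castSucc, Fin.succ_castSucc, Fin.snoc_castSucc]
  rw [Finset.prod_congr rfl fun i _ => hmid i]
  rw [hlast]
  ring

lemma trajProb_nonneg (hstep0 : ∀ A B, 0 ≤ step A B) (T : ℕ) (ω : Fin (T+1) → Finset V) :
    0 ≤ trajProb step A₀ T ω := by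
  unfold trajProb
  refine mul_nonneg ?_ (Finset.prod_nonneg fun i _ => hstep0 _ _)
  split <;> norm_num

lemma trajProb_total (hstep1 : ∀ A, ∑ B, step A B = 1) (T : ℕ) :
    ∑ ω : Fin (T+1) → Finset V, trajProb step A₀ T ω = 1 := by
  induction T with
  | zero =>
      rw [← Equiv.sum_comp (Equiv.funUnique (Fin 1) (Finset V)).symm
        (trajProb step A₀ 0)]
      have : ∀ B : Finset V,
          trajProb step A₀ 0 ((Equiv.funUnique (Fin 1) (Finset V)).symm B)
            = if B = A₀ then 1 else 0 := by
        intro B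
        unfold trajProb
        simp
      rw [Finset.sum_congr rfl fun B _ => this B]
      rw [Finset.sum_ite_eq' Finset.univ A₀ (fun _ => (1:ℝ))]
      simp
  | succ T ih =>
      rw [sum_snoc]
      have : ∀ ω' : Fin (T+1) → Finset V,
          ∑ B : Finset V, trajProb step A₀ (T+1) (Fin.snoc ω' B)
            = trajProb step A₀ T ω' := by
        intro ω'
        rw [Finset.sum_congr rfl fun B _ => trajProb_snoc step A₀ T ω' B,
          ← Finset.mul_sum, hstep1, mul_one]
      rw [Finset.sum_congr rfl fun ω' _ => this ω']
      exact ih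

lemma trajPr_nonneg (hstep0 : ∀ A B, 0 ≤ step A B) (T : ℕ)
    (Q : (Fin (T+1) → Finset V) → Prop) :
    0 ≤ trajPr step A₀ T Q := by
  unfold trajPr
  refine Finset.sum_nonneg fun ω _ => ?_
  split
  · exact trajProb_nonneg step A₀ hstep0 T ω
  · exact le_refl 0

lemma trajPr_add_compl (hstep1 : ∀ A, ∑ B, step A B = 1) (T : ℕ)
    (Q : (Fin (T+1) → Finset V) → Prop) :
    trajPr step A₀ T Q + trajPr step A₀ T (fun ω => ¬ Q ω) = 1 := by
  unfold trajPr
  rw [← Finset.sum_add_distrib]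
  rw [← trajProb_total step A₀ hstep1 T]
  refine Finset.sum_congr rfl fun ω _ => ?_
  by_cases hq : Q ω <;> simp [hq]

lemma trajPr_mono (hstep0 : ∀ A B, 0 ≤ step A B) (T : ℕ)
    {Q Q' : (Fin (T+1) → Finset V) → Prop} (himp : ∀ ω, Q ω → Q' ω) :
    trajPr step A₀ T Q ≤ trajPr step A₀ T Q' := by
  unfold trajPr
  refine Finset.sum_le_sum fun ω _ => ?_
  by_cases hq : Q ω
  · rw [if_pos hq, if_pos (himp ω hq)]
  · rw [if_neg hq]
    split
    · exact trajProb_nonneg step A₀ hstep0 T ω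
    · exact le_refl 0

lemma trajPr_or_le (hstep0 : ∀ A B, 0 ≤ step A B) (T : ℕ)
    (Q₁ Q₂ : (Fin (T+1) → Finset V) → Prop) :
    trajPr step A₀ T (fun ω => Q₁ ω ∨ Q₂ ω)
      ≤ trajPr step A₀ T Q₁ + trajPr step A₀ T Q₂ := by
  unfold trajPr
  rw [← Finset.sum_add_distrib]
  refine Finset.sum_le_sum fun ω _ => ?_
  have hp := trajProb_nonneg step A₀ hstep0 T ω
  by_cases h1 : Q₁ ω <;> by_cases h2 : Q₂ ω <;> simp [h1, h2] <;> linarith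

lemma trajPr_exists_le (hstep0 : ∀ A B, 0 ≤ step A B) (T : ℕ) {ι : Type*}
    (s : Finset ι) (E : ι → (Fin (T+1) → Finset V) → Prop) :
    trajPr step A₀ T (fun ω => ∃ t ∈ s, E t ω)
      ≤ ∑ t ∈ s, trajPr step A₀ T (E t) := by
  classical
  unfold trajPr
  rw [Finset.sum_comm]
  refine Finset.sum_le_sum fun ω _ => ?_
  have hp := trajProb_nonneg step A₀ hstep0 T ω
  by_cases h : ∃ t ∈ s, E t ω
  · rw [if_pos h]
    obtain ⟨t₀, ht₀, hE⟩ := h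
    calc trajProb step A₀ T ω
        = (if E t₀ ω then trajProb step A₀ T ω else 0) := by rw [if_pos hE]
      _ ≤ ∑ t ∈ s, (if E t ω then trajProb step A₀ T ω else 0) := by
          refine Finset.single_le_sum (f := fun t => if E t ω then trajProb step A₀ T ω else 0)
            (fun t _ => ?_) ht₀
          split
          · exact hp
          · exact le_refl 0
  · rw [if_neg h]
    refine Finset.sum_nonneg fun t _ => ?_
    split
    · exact hp
    · exact le_refl 0

lemma trajPr_start (T : ℕ) (Q : (Fin (T+1) → Finset V) → Prop) :
    trajPr step A₀ T Q = trajPr step A₀ T (fun ω => Q ω ∧ ω 0 = A₀) := by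
  unfold trajPr
  refine Finset.sum_congr rfl fun ω _ => ?_
  by_cases h0 : ω 0 = A₀
  · by_cases hq : Q ω <;> simp [h0, hq]
  · have : trajProb step A₀ T ω = 0 := by
      unfold trajProb
      rw [if_neg h0, zero_mul]
    simp [this]

lemma trajPr_prefix (hstep1 : ∀ A, ∑ B, step A B = 1) (T : ℕ)
    (Q' : (Fin (T+1) → Finset V) → Prop) :
    trajPr step A₀ (T+1) (fun ω => Q' (fun i => ω i.castSucc))
      = trajPr step A₀ T Q' := by
  classical
  unfold trajPr
  rw [sum_snoc]
  refine Eq.trans (Finset.sum_congr rfl fun ω' _ => ?_) rfl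
  have hres : ∀ B : Finset V,
      (fun i : Fin (T+1) => (Fin.snoc ω' B : Fin (T+2) → Finset V) i.castSucc) = ω' := by
    intro B
    funext i
    rw [Fin.snoc_castSucc]
  have hB : ∀ B : Finset V,
      (if Q' (fun i : Fin (T+1) => (Fin.snoc ω' B : Fin (T+2) → Finset V) i.castSucc)
        then trajProb step A₀ (T+1) (Fin.snoc ω' B) else 0)
      = (if Q' ω' then trajProb step A₀ T ω' * step (ω' (Fin.last T)) B else 0) := by
    intro B
    exact if_congr (iff_of_eq (congrArg Q' (hres B))) (trajProb_snoc step A₀ T ω' B) rfl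
  refine Eq.trans (Finset.sum_congr rfl fun B _ => hB B) ?_
  by_cases hq : Q' ω'
  · rw [Finset.sum_congr rfl fun B _ => if_pos hq, ← Finset.mul_sum, hstep1, mul_one,
      if_pos hq]
  · rw [Finset.sum_congr rfl fun B _ => if_neg hq, Finset.sum_const_zero, if_neg hq]

lemma trajPr_prefix_le (hstep1 : ∀ A, ∑ B, step A B = 1) (m k : ℕ)
    (Q : (Fin (m+1) → Finset V) → Prop) :
    trajPr step A₀ (m+k) (fun ω => Q (fun i => ω (Fin.castLE (by omega) i)))
      = trajPr step A₀ m Q := by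
  induction k with
  | zero =>
      exact congrArg (trajPr step A₀ m)
        (funext fun ω => congrArg Q (funext fun i => congrArg ω (Fin.ext rfl)))
  | succ k ih =>
      have h1 := trajPr_prefix step A₀ hstep1 (m+k)
        (fun ω' : Fin ((m+k)+1) → Finset V => Q (fun i => ω' (Fin.castLE (by omega) i)))
      rw [← ih, ← h1]
      exact congrArg (trajPr step A₀ (m+k+1))
        (funext fun ω => congrArg Q (funext fun i => congrArg ω (Fin.ext rfl)))


lemma Y_rec (good : Finset V → Prop) [DecidablePred good] (γ₀ m0 : ℝ) (hγ : 0 ≤ γ₀)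
    (hstep0 : ∀ A B, 0 ≤ step A B)
    (hmean : ∀ A, good A → ∑ B, step A B * ((Finset.univ \ B).card : ℝ)
      ≤ γ₀ * ((Finset.univ \ A).card : ℝ))
    (hA₀ : ((Finset.univ \ A₀).card : ℝ) ≤ m0) (hm0 : 0 ≤ m0) (T : ℕ) :
    ∑ ω : Fin (T+1) → Finset V, trajProb step A₀ T ω *
        (∏ s : Fin (T+1), (if good (ω s) then (1:ℝ) else 0)) *
        ((Finset.univ \ ω (Fin.last T)).card : ℝ) ≤ γ₀^T * m0 := by
  classical
  induction T with
  | zero =>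
      rw [← Equiv.sum_comp (Equiv.funUnique (Fin 1) (Finset V)).symm _]
      have hterm : ∀ B : Finset V,
          trajProb step A₀ 0 ((Equiv.funUnique (Fin 1) (Finset V)).symm B) *
            (∏ s : Fin 1, (if good (((Equiv.funUnique (Fin 1) (Finset V)).symm B) s)
              then (1:ℝ) else 0)) *
            ((Finset.univ \ ((Equiv.funUnique (Fin 1) (Finset V)).symm B) (Fin.last 0)).card : ℝ)
          = if B = A₀ then
              (if good A₀ then (1:ℝ) else 0) * ((Finset.univ \ A₀).card : ℝ) else 0 := by
        intro B
        unfold trajProb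
        by_cases hB : B = A₀
        · subst hB
          simp
        · simp [hB]
      rw [Finset.sum_congr rfl fun B _ => hterm B]
      rw [Finset.sum_ite_eq' Finset.univ A₀ _]
      simp only [Finset.mem_univ, if_pos, pow_zero, one_mul]
      by_cases hg : good A₀
      · rw [if_pos hg, one_mul]; exact hA₀
      · rw [if_neg hg, zero_mul]; exact hm0
  | succ T ih =>
      rw [sum_snoc]
      have key : ∀ ω' : Fin (T+1) → Finset V, ∀ B : Finset V,
          trajProb step A₀ (T+1) (Fin.snoc ω' B) *
            (∏ s : Fin (T+2), (if good ((Fin.snoc ω' B : Fin (T+2) → Finset V) s)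
              then (1:ℝ) else 0)) *
            ((Finset.univ \ (Fin.snoc ω' B : Fin (T+2) → Finset V) (Fin.last (T+1))).card : ℝ)
          = trajProb step A₀ T ω' * (∏ s : Fin (T+1), (if good (ω' s) then (1:ℝ) else 0)) *
              (step (ω' (Fin.last T)) B * (if good B then (1:ℝ) else 0) *
                ((Finset.univ \ B).card : ℝ)) := by
        intro ω' B
        rw [trajProb_snoc step A₀ T ω' B]
        rw [Fin.prod_univ_castSucc
          (fun s : Fin (T+2) => if good ((Fin.snoc ω' B : Fin (T+2) → Finset V) s)
            then (1:ℝ) else 0)]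
        simp only [Fin.snoc_castSucc, Fin.snoc_last]
        ring
      rw [Finset.sum_congr rfl fun ω' _ => Finset.sum_congr rfl fun B _ => key ω' B]
      have inner_le : ∀ ω' : Fin (T+1) → Finset V,
          ∑ B : Finset V, trajProb step A₀ T ω' *
            (∏ s : Fin (T+1), (if good (ω' s) then (1:ℝ) else 0)) *
              (step (ω' (Fin.last T)) B * (if good B then (1:ℝ) else 0) *
                ((Finset.univ \ B).card : ℝ))
          ≤ γ₀ * (trajProb step A₀ T ω' *
              (∏ s : Fin (T+1), (if good (ω' s) then (1:ℝ) else 0)) *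
              ((Finset.univ \ (ω' (Fin.last T))).card : ℝ)) := by
        intro ω'
        have hp := trajProb_nonneg step A₀ hstep0 T ω'
        have hG : 0 ≤ ∏ s : Fin (T+1), (if good (ω' s) then (1:ℝ) else 0) :=
          Finset.prod_nonneg fun s _ => by split <;> norm_num
        by_cases hg : good (ω' (Fin.last T))
        · rw [← Finset.mul_sum]
          have h1 : ∑ B : Finset V, step (ω' (Fin.last T)) B * (if good B then (1:ℝ) else 0) *
              ((Finset.univ \ B).card : ℝ)
              ≤ γ₀ * ((Finset.univ \ (ω' (Fin.last T))).card : ℝ) := by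
            calc ∑ B : Finset V, step (ω' (Fin.last T)) B * (if good B then (1:ℝ) else 0) *
                ((Finset.univ \ B).card : ℝ)
                ≤ ∑ B : Finset V, step (ω' (Fin.last T)) B * ((Finset.univ \ B).card : ℝ) := by
                  refine Finset.sum_le_sum fun B _ => ?_
                  have hs := hstep0 (ω' (Fin.last T)) B
                  have hX : (0:ℝ) ≤ ((Finset.univ \ B).card : ℝ) := Nat.cast_nonneg _
                  by_cases hgB : good B
                  · rw [if_pos hgB, mul_one]
                  · rw [if_neg hgB, mul_zero, zero_mul]
                    positivity
              _ ≤ γ₀ * ((Finset.univ \ (ω' (Fin.last T))).card : ℝ) := hmean _ hg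
          calc trajProb step A₀ T ω' * (∏ s : Fin (T+1), (if good (ω' s) then (1:ℝ) else 0)) *
              ∑ B : Finset V, (step (ω' (Fin.last T)) B * (if good B then (1:ℝ) else 0) *
                ((Finset.univ \ B).card : ℝ))
              ≤ trajProb step A₀ T ω' * (∏ s : Fin (T+1), (if good (ω' s) then (1:ℝ) else 0)) *
                (γ₀ * ((Finset.univ \ (ω' (Fin.last T))).card : ℝ)) := by
                refine mul_le_mul_of_nonneg_left ?_ (mul_nonneg hp hG)
                exact h1
            _ = γ₀ * (trajProb step A₀ T ω' *
                (∏ s : Fin (T+1), (if good (ω' s) then (1:ℝ) else 0)) *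
                ((Finset.univ \ (ω' (Fin.last T))).card : ℝ)) := by ring
        · have hG0 : (∏ s : Fin (T+1), (if good (ω' s) then (1:ℝ) else 0)) = 0 := by
            refine Finset.prod_eq_zero (Finset.mem_univ (Fin.last T)) ?_
            rw [if_neg hg]
          rw [hG0]
          simp
      calc ∑ ω' : Fin (T+1) → Finset V, ∑ B : Finset V,
          trajProb step A₀ T ω' * (∏ s : Fin (T+1), (if good (ω' s) then (1:ℝ) else 0)) *
            (step (ω' (Fin.last T)) B * (if good B then (1:ℝ) else 0) *
              ((Finset.univ \ B).card : ℝ))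
          ≤ ∑ ω' : Fin (T+1) → Finset V, γ₀ * (trajProb step A₀ T ω' *
              (∏ s : Fin (T+1), (if good (ω' s) then (1:ℝ) else 0)) *
              ((Finset.univ \ (ω' (Fin.last T))).card : ℝ)) :=
            Finset.sum_le_sum fun ω' _ => inner_le ω'
        _ = γ₀ * ∑ ω' : Fin (T+1) → Finset V, (trajProb step A₀ T ω' *
              (∏ s : Fin (T+1), (if good (ω' s) then (1:ℝ) else 0)) *
              ((Finset.univ \ (ω' (Fin.last T))).card : ℝ)) := by rw [Finset.mul_sum]
        _ ≤ γ₀ * (γ₀^T * m0) := mul_le_mul_of_nonneg_left ih hγ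
        _ = γ₀^(T+1) * m0 := by ring

lemma trajPr_final_le_Y (good : Finset V → Prop) [DecidablePred good] (γ₀ m0 : ℝ) (hγ : 0 ≤ γ₀)
    (hstep0 : ∀ A B, 0 ≤ step A B)
    (hmean : ∀ A, good A → ∑ B, step A B * ((Finset.univ \ B).card : ℝ)
      ≤ γ₀ * ((Finset.univ \ A).card : ℝ))
    (hA₀ : ((Finset.univ \ A₀).card : ℝ) ≤ m0) (hm0 : 0 ≤ m0) (T : ℕ) :
    trajPr step A₀ T (fun ω => (∀ s, good (ω s)) ∧ ω (Fin.last T) ≠ Finset.univ)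
      ≤ γ₀^T * m0 := by
  classical
  refine le_trans ?_ (Y_rec step A₀ good γ₀ m0 hγ hstep0 hmean hA₀ hm0 T)
  unfold trajPr
  refine Finset.sum_le_sum fun ω _ => ?_
  have hp := trajProb_nonneg step A₀ hstep0 T ω
  by_cases hQ : (∀ s, good (ω s)) ∧ ω (Fin.last T) ≠ Finset.univ
  · rw [if_pos hQ]
    have hG : (∏ s : Fin (T+1), (if good (ω s) then (1:ℝ) else 0)) = 1 :=
      Finset.prod_eq_one fun s _ => if_pos (hQ.1 s)
    have hX : (1:ℝ) ≤ ((Finset.univ \ ω (Fin.last T)).card : ℝ) := by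
      have hne : (Finset.univ \ ω (Fin.last T)).Nonempty := by
        rw [Finset.sdiff_nonempty]
        intro hsub
        exact hQ.2 (Finset.univ_subset_iff.mp hsub)
      have := Finset.Nonempty.card_pos hne
      exact_mod_cast this
    rw [hG, mul_one]
    nlinarith
  · rw [if_neg hQ]
    have hG : 0 ≤ ∏ s : Fin (T+1), (if good (ω s) then (1:ℝ) else 0) :=
      Finset.prod_nonneg fun s _ => by split <;> norm_num
    have hX : (0:ℝ) ≤ ((Finset.univ \ ω (Fin.last T)).card : ℝ) := Nat.cast_nonneg _
    positivity

lemma escape_step (good : Finset V → Prop) [DecidablePred good] (ε : ℝ) (hε : 0 ≤ ε)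
    (hstep0 : ∀ A B, 0 ≤ step A B) (hstep1 : ∀ A, ∑ B, step A B = 1)
    (hesc : ∀ A, good A → ∑ B, step A B * (if good B then (0:ℝ) else 1) ≤ ε) (t : ℕ) :
    trajPr step A₀ (t+1) (fun ω => good (ω (Fin.castSucc (Fin.last t))) ∧
      ¬ good (ω (Fin.last (t+1)))) ≤ ε := by
  classical
  unfold trajPr
  rw [sum_snoc]
  have hcond : ∀ (ω' : Fin (t+1) → Finset V) (B : Finset V),
      (good ((Fin.snoc ω' B : Fin (t+2) → Finset V) (Fin.castSucc (Fin.last t))) ∧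
        ¬ good ((Fin.snoc ω' B : Fin (t+2) → Finset V) (Fin.last (t+1))))
      ↔ (good (ω' (Fin.last t)) ∧ ¬ good B) := by
    intro ω' B
    rw [Fin.snoc_castSucc, Fin.snoc_last]
  refine le_trans (Finset.sum_le_sum
    (g := fun ω' : Fin (t+1) → Finset V => trajProb step A₀ t ω' * ε)
    (fun ω' _ => ?_)) ?_
  · have hp := trajProb_nonneg step A₀ hstep0 t ω'
    by_cases hg : good (ω' (Fin.last t))
    · refine le_trans (Finset.sum_le_sum
        (g := fun B : Finset V => trajProb step A₀ t ω' *
          (step (ω' (Fin.last t)) B * (if good B then (0:ℝ) else 1)))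
        (fun B _ => ?_)) ?_
      · dsimp only
        by_cases hgB : good B
        · rw [if_neg (fun h => ((hcond ω' B).mp h).2 hgB), if_pos hgB, mul_zero, mul_zero]
        · rw [if_pos ((hcond ω' B).mpr ⟨hg, hgB⟩), if_neg hgB, mul_one,
            trajProb_snoc step A₀ t ω' B]
      · rw [← Finset.mul_sum]
        exact mul_le_mul_of_nonneg_left (hesc _ hg) hp
    · refine le_trans (le_of_eq (Finset.sum_eq_zero fun B _ => ?_)) (mul_nonneg hp hε)
      exact if_neg (fun h => hg ((hcond ω' B).mp h).1)
  · rw [← Finset.sum_mul, trajProb_total step A₀ hstep1 t, one_mul]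

/-- Event: the chain is good at time `t` and bad at time `t+1`. -/
def Ebad (good : Finset V → Prop) (T t : ℕ) (ω : Fin (T+1) → Finset V) : Prop :=
  ∃ (h1 : t < T+1) (h2 : t+1 < T+1), good (ω ⟨t, h1⟩) ∧ ¬ good (ω ⟨t+1, h2⟩)

lemma first_bad (good : Finset V → Prop) (T : ℕ) (ω : Fin (T+1) → Finset V)
    (h0 : good (ω 0)) (hbad : ¬ ∀ s, good (ω s)) :
    ∃ t ∈ Finset.range T, Ebad good T t ω := by
  classical
  push_neg at hbad
  have hex : ∃ j : ℕ, ∃ hj : j < T+1, ¬ good (ω ⟨j, hj⟩) := by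
    obtain ⟨s, hs⟩ := hbad
    exact ⟨s.val, s.isLt, by rwa [Fin.eta]⟩
  set j := Nat.find hex with hj_def
  obtain ⟨hjlt, hbadj⟩ := Nat.find_spec hex
  have hj0 : j ≠ 0 := by
    intro h
    apply hbadj
    have : (⟨j, hjlt⟩ : Fin (T+1)) = 0 := by
      apply Fin.ext
      simp [h]
    rw [this]
    exact h0
  have hgoodprev : good (ω ⟨j-1, by omega⟩) := by
    by_contra hcon
    have := Nat.find_min hex (m := j-1) (by omega)
    push_neg at this
    exact absurd (this (by omega)) (by simpa using hcon)
  refine ⟨j-1, Finset.mem_range.mpr (by omega), ⟨by omega, by omega, hgoodprev, ?_⟩⟩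
  have : (⟨j-1+1, by omega⟩ : Fin (T+1)) = ⟨j, hjlt⟩ := by
    apply Fin.ext
    simp
    omega
  rw [this]
  exact hbadj

lemma trajPr_Ebad_le (good : Finset V → Prop) [DecidablePred good] (ε : ℝ) (hε : 0 ≤ ε)
    (hstep0 : ∀ A B, 0 ≤ step A B) (hstep1 : ∀ A, ∑ B, step A B = 1)
    (hesc : ∀ A, good A → ∑ B, step A B * (if good B then (0:ℝ) else 1) ≤ ε)
    {t T : ℕ} (ht : t < T) :
    trajPr step A₀ T (Ebad good T t) ≤ ε := by
  obtain ⟨k, hk⟩ : ∃ k, T = (t+1) + k := ⟨T - (t+1), by omega⟩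
  subst hk
  have hpred : Ebad good ((t+1)+k) t = fun ω : Fin ((t+1)+k+1) → Finset V =>
      (fun ω' : Fin (t+2) → Finset V => good (ω' (Fin.castSucc (Fin.last t))) ∧
        ¬ good (ω' (Fin.last (t+1))))
      (fun i : Fin (t+2) => ω (Fin.castLE (by omega) i)) := by
    funext ω
    apply propext
    constructor
    · rintro ⟨h1, h2, hg, hb⟩
      constructor
      · convert hg using 2; ext; simp
      · convert hb using 3; ext; simp
    · rintro ⟨hg, hb⟩
      refine ⟨by omega, by omega, ?_, ?_⟩
      · convert hg using 2; ext; simp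
      · convert hb using 3; ext; simp
  have h2 := trajPr_prefix_le step A₀ hstep1 (t+1) k
    (Q := fun ω' : Fin (t+2) → Finset V => good (ω' (Fin.castSucc (Fin.last t))) ∧
      ¬ good (ω' (Fin.last (t+1))))
  have h3 : trajPr step A₀ ((t+1)+k) (Ebad good ((t+1)+k) t)
      = trajPr step A₀ (t+1) (fun ω' : Fin (t+2) → Finset V =>
          good (ω' (Fin.castSucc (Fin.last t))) ∧ ¬ good (ω' (Fin.last (t+1)))) := by
    rw [← h2]
    exact congrArg (trajPr step A₀ ((t+1)+k)) hpred
  rw [h3]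
  exact escape_step step A₀ good ε hε hstep0 hstep1 hesc t


end Traj

lemma exp_le_quadratic {s : ℝ} (h0 : 0 ≤ s) (h1 : s ≤ 1) :
    Real.exp s ≤ 1 + s + s^2 := by
  have hb := Real.exp_bound (x := s) (by rwa [abs_of_nonneg h0]) (n := 3) (by norm_num)
  have hsum : ∑ m ∈ Finset.range 3, s ^ m / (Nat.factorial m : ℝ)
      = 1 + s + s^2/2 := by
    rw [Finset.sum_range_succ, Finset.sum_range_succ, Finset.sum_range_one]
    norm_num [Nat.factorial]
  rw [hsum, abs_of_nonneg h0] at hb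
  have hb2 := (abs_le.mp hb).2
  have hs3 : s^3 ≤ s^2 := by nlinarith [sq_nonneg s]
  norm_num [Nat.factorial] at hb2
  nlinarith [hb2, hs3, sq_nonneg s]

end BIPSaux


universe u

/- **Statement 8** (Lemma 9 of the paper).  There are absolute constants `C₀, c > 0`
such that for every connected `r`-regular graph `G` on `n` vertices with
`1 - λ ≥ C₀·√(log n / n)`, if the BIPS process with source `v` and `k = 2` starts from a
set `A₀ ∋ v` with `|A₀| ≥ (9/10)·n`, then with probability at least `1 - c·n^{-5}`
within `⌈8·log n/(1-λ)⌉` further rounds the whole vertex set becomes infected. -/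
set_option maxHeartbeats 2000000 in
/-- Lemma 9 of the paper.  There are absolute constants `C₀, c > 0`
such that for every connected `r`-regular graph `G` on `n` vertices with
`1 - λ ≥ C₀·√(log n / n)`, if the BIPS process with source `v` and `k = 2` starts from a
set `A₀ ∋ v` with `|A₀| ≥ (9/10)·n`, then with probability at least `1 - c·n^{-5}`
within `⌈8·log n/(1-λ)⌉` further rounds the whole vertex set becomes infected. -/
theorem bips_final_phase :
    ∃ C₀ c : ℝ, 0 < C₀ ∧ 0 < c ∧
      ∀ (V : Type u) [Fintype V] [DecidableEq V] (G : SimpleGraph V)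
        [DecidableRel G.Adj] (r : ℕ),
        G.Connected → G.IsRegularOfDegree r →
        1 - secondEigen G r ≥
          C₀ * Real.sqrt (Real.log (Fintype.card V) / (Fintype.card V)) →
        ∀ (v : V) (A₀ : Finset V), v ∈ A₀ →
          (9/10 : ℝ) * (Fintype.card V : ℝ) ≤ (A₀.card : ℝ) →
          1 - c / (Fintype.card V : ℝ) ^ 5 ≤
            trajPr (bipsStep G r 2 v) A₀
              ⌈8 * Real.log (Fintype.card V) / (1 - secondEigen G r)⌉₊
              (fun ω => ∃ s, ω s = Finset.univ) := by
  classical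
  refine ⟨20, 1, by norm_num, by norm_num, ?_⟩
  intro V _ _ G _ r hconn hreg hgap v A₀ hvA₀ hA₀
  have hstep0 : ∀ A B : Finset V, 0 ≤ bipsStep G r 2 v A B :=
    fun A B => BIPSaux.bipsStep_nonneg G v hreg A B
  have hstep1 : ∀ A : Finset V, ∑ B : Finset V, bipsStep G r 2 v A B = 1 :=
    fun A => BIPSaux.bipsStep_sum G v hreg A
  have hcard1 : 1 ≤ Fintype.card V := Fintype.card_pos_iff.mpr ⟨v⟩
  by_cases hone : Fintype.card V = 1
  · refine le_trans (show (1:ℝ) - 1 / ((Fintype.card V : ℝ))^5 ≤ 0 by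
      rw [hone]; norm_num) ?_
    exact BIPSaux.trajPr_nonneg _ _ hstep0 _ _
  -- main case
  have hcard2 : 2 ≤ Fintype.card V := by omega
  set n' : ℝ := (Fintype.card V : ℝ) with hn'
  have hn'2 : (2:ℝ) ≤ n' := by rw [hn']; exact_mod_cast hcard2
  have hn'pos : (0:ℝ) < n' := by linarith
  set L : ℝ := Real.log n' with hL
  have hLpos : 0 < L := Real.log_pos (by linarith)
  have hLn : L ≤ n' := by
    have := Real.log_le_sub_one_of_pos hn'pos
    rw [← hL] at this
    linarith
  set lam : ℝ := secondEigen G r with hlam_def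
  have hx : (0:ℝ) < L / n' := div_pos hLpos hn'pos
  have hsq : 0 < Real.sqrt (L / n') := Real.sqrt_pos.mpr hx
  have hgap' : 1 - lam ≥ 20 * Real.sqrt (L / n') := hgap
  have h1mlam : 0 < 1 - lam := lt_of_lt_of_le (by positivity) hgap'
  have hlam1 : lam < 1 := by linarith
  have hlam0 : 0 ≤ lam := BIPSaux.secondEigen_nonneg G (r := r)
  have hgap2 : 400 * (L / n') ≤ (1 - lam)^2 := by
    nlinarith [Real.sq_sqrt hx.le, Real.sqrt_nonneg (L / n')]
  have hr : 0 < r := by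
    by_contra hr0
    push_neg at hr0
    interval_cases r
    obtain ⟨u, hu⟩ := Fintype.exists_ne_of_one_lt_card (by omega) v
    obtain ⟨w⟩ := (hconn u v)
    cases w with
    | nil => exact hu rfl
    | cons h p =>
        have hpos := (G.degree_pos_iff_exists_adj u).mpr ⟨_, h⟩
        rw [hreg u] at hpos
        omega
  have hn0 : 0 < Fintype.card V := hcard1
  set good : Finset V → Prop := fun A => ((Finset.univ \ A).card : ℝ) ≤ n' / 10
    with hgood_def
  have hgoodA₀ : good A₀ := by
    have hsub : A₀ ⊆ Finset.univ := Finset.subset_univ A₀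
    have hcards : ((Finset.univ \ A₀).card : ℝ) = n' - (A₀.card : ℝ) := by
      rw [Finset.card_sdiff_of_subset hsub, Finset.card_univ]
      rw [Nat.cast_sub (Finset.card_le_univ A₀), ← hn']
    show ((Finset.univ \ A₀).card : ℝ) ≤ n' / 10
    rw [hcards]
    linarith
  set γ₀ : ℝ := 1 - (9/10) * (1 - lam) with hγ₀_def
  have h1ml1 : 1 - lam ≤ 1 := by linarith
  have hγ₀0 : 0 ≤ γ₀ := by rw [hγ₀_def]; nlinarith
  have hγ₀exp : γ₀ ≤ Real.exp (-((9/10) * (1 - lam))) := by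
    have := Real.add_one_le_exp (-((9/10) * (1 - lam)))
    rw [hγ₀_def]; linarith
  have hmean : ∀ A : Finset V, good A →
      ∑ B : Finset V, bipsStep G r 2 v A B * ((Finset.univ \ B).card : ℝ)
        ≤ γ₀ * ((Finset.univ \ A).card : ℝ) := by
    intro A hgA
    rw [BIPSaux.bipsStep_expect G v hreg A]
    exact BIPSaux.mean_contract G v hreg hr hn0 hlam1 hlam0 A hgA
  set ε : ℝ := (n'^8)⁻¹ with hε_def
  have hεpos : 0 < ε := by rw [hε_def]; positivity
  have hesc : ∀ A : Finset V, good A →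
      ∑ B : Finset V, bipsStep G r 2 v A B * (if good B then (0:ℝ) else 1) ≤ ε := by
    intro A hgA
    set ss : ℝ := (9/20) * (1 - lam) with hss_def
    have hss0 : 0 ≤ ss := by rw [hss_def]; positivity
    have hss1 : ss ≤ 1 := by rw [hss_def]; nlinarith
    have hch := BIPSaux.bipsStep_chernoff G v hreg A (s := ss) (m := n'/10) hss0
    set μA : ℝ := ∑ u ∈ Finset.univ.erase v, (1 - pInf G r 2 A u) with hμA_def
    have hμ : μA ≤ γ₀ * (n'/10) := by
      have h1 := BIPSaux.mean_contract G v hreg hr hn0 hlam1 hlam0 A hgA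
      have h2 : ((Finset.univ \ A).card : ℝ) ≤ n'/10 := hgA
      calc μA ≤ γ₀ * ((Finset.univ \ A).card : ℝ) := h1
        _ ≤ γ₀ * (n'/10) := mul_le_mul_of_nonneg_left h2 hγ₀0
    set d : ℝ := (9/100) * (1 - lam) * n' with hd_def
    have hd0 : 0 < d := by rw [hd_def]; positivity
    have hγm : γ₀ * (n'/10) = n'/10 - d := by rw [hγ₀_def, hd_def]; ring
    have hexps : Real.exp ss - 1 ≤ ss + ss^2 := by
      have := BIPSaux.exp_le_quadratic hss0 hss1
      linarith
    have hexps0 : 0 ≤ Real.exp ss - 1 := by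
      have h := Real.exp_le_exp.mpr hss0
      rw [Real.exp_zero] at h
      linarith
    have hdm : d ≤ n'/10 := by rw [hd_def]; nlinarith
    have hm0ne : (n'/10) ≠ 0 := by positivity
    have hssd : ss = d / (2 * (n'/10)) := by
      rw [hss_def, hd_def]; field_simp; ring
    have hexponent : (Real.exp ss - 1) * μA - ss * (n'/10) ≤ -(d^2 / (4 * (n'/10))) := by
      have hmu2 : μA ≤ n'/10 - d := by rw [← hγm]; exact hμ
      have h1 : (Real.exp ss - 1) * μA ≤ (ss + ss^2) * (n'/10 - d) := by
        calc (Real.exp ss - 1) * μA ≤ (Real.exp ss - 1) * (n'/10 - d) :=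
              mul_le_mul_of_nonneg_left hmu2 hexps0
          _ ≤ (ss + ss^2) * (n'/10 - d) := by
              have hmd : 0 ≤ n'/10 - d := by linarith
              exact mul_le_mul_of_nonneg_right hexps hmd
      have h3 : (ss + ss^2) * (n'/10 - d) - ss * (n'/10) ≤ ss^2 * (n'/10) - ss * d := by
        nlinarith [mul_nonneg (sq_nonneg ss) hd0.le]
      have h4 : ss^2 * (n'/10) - ss * d = -(d^2/(4*(n'/10))) := by
        rw [hssd]
        field_simp
        ring
      linarith
    have hd2m : 8 * L ≤ d^2 / (4 * (n'/10)) := by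
      have h2 : 400 * L ≤ (1-lam)^2 * n' := by
        have heq : 400 * (L/n') * n' = 400 * L := by field_simp
        calc 400 * L = 400 * (L/n') * n' := heq.symm
          _ ≤ (1-lam)^2 * n' := mul_le_mul_of_nonneg_right hgap2 hn'pos.le
      rw [le_div_iff₀ (by positivity : (0:ℝ) < 4*(n'/10)), hd_def]
      nlinarith [mul_le_mul_of_nonneg_right h2 hn'pos.le, hLpos, hn'pos]
    calc ∑ B : Finset V, bipsStep G r 2 v A B * (if good B then (0:ℝ) else 1)
        ≤ Real.exp ((Real.exp ss - 1) * μA - ss * (n'/10)) := hch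
      _ ≤ Real.exp (-(8*L)) := by
          apply Real.exp_le_exp.mpr
          linarith [hexponent, hd2m]
      _ = ε := by
          rw [hε_def, show (8:ℝ)*L = ((8:ℕ):ℝ)*L by norm_num, Real.exp_neg,
            Real.exp_nat_mul, Real.exp_log hn'pos]
  -- horizon bounds
  set T : ℕ := ⌈8 * L / (1 - lam)⌉₊ with hT_def
  have hTge : 8 * L / (1 - lam) ≤ (T : ℝ) := Nat.le_ceil _
  have hsqnL : L ≤ n' * Real.sqrt (L/n') := by
    have h1 : n' * Real.sqrt (L/n') = Real.sqrt (n'^2 * (L/n')) := by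
      rw [Real.sqrt_mul (by positivity), Real.sqrt_sq hn'pos.le]
    have h2 : n'^2 * (L/n') = n' * L := by field_simp
    rw [h1, h2]
    have h3 : L = Real.sqrt (L^2) := by rw [Real.sqrt_sq hLpos.le]
    rw [h3]
    apply Real.sqrt_le_sqrt
    nlinarith
  have hTle : (T : ℝ) ≤ n' := by
    have harg0 : 0 ≤ 8 * L / (1 - lam) := by positivity
    have hceil := Nat.ceil_lt_add_one harg0
    have hbound : 8 * L / (1 - lam) ≤ (2/5) * n' := by
      rw [div_le_iff₀ h1mlam]
      have hmul := mul_le_mul_of_nonneg_left hgap' (by positivity : (0:ℝ) ≤ (2/5) * n')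
      nlinarith [hsqnL, Real.sqrt_nonneg (L/n')]
    have : (T:ℝ) < (2/5)*n' + 1 := by
      calc (T:ℝ) < 8 * L / (1 - lam) + 1 := hceil
        _ ≤ (2/5)*n' + 1 := by linarith
    linarith
  -- assemble failure bound
  have hfail : trajPr (bipsStep G r 2 v) A₀ T
      (fun ω => ¬ ∃ s, ω s = Finset.univ) ≤ 1 / n'^5 := by
    rw [BIPSaux.trajPr_start]
    have himp : ∀ ω : Fin (T+1) → Finset V,
        ((¬ ∃ s, ω s = Finset.univ) ∧ ω 0 = A₀) →
        ((∃ t ∈ Finset.range T, BIPSaux.Ebad good T t ω) ∨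
          ((∀ s, good (ω s)) ∧ ω (Fin.last T) ≠ Finset.univ)) := by
      rintro ω ⟨hnQ, h0⟩
      push_neg at hnQ
      by_cases hall : ∀ s, good (ω s)
      · exact Or.inr ⟨hall, hnQ _⟩
      · exact Or.inl (BIPSaux.first_bad good T ω (by rw [h0]; exact hgoodA₀) hall)
    refine le_trans (BIPSaux.trajPr_mono _ _ hstep0 T himp) ?_
    refine le_trans (BIPSaux.trajPr_or_le _ _ hstep0 T _ _) ?_
    have hE : trajPr (bipsStep G r 2 v) A₀ T
        (fun ω => ∃ t ∈ Finset.range T, BIPSaux.Ebad good T t ω) ≤ (T:ℝ) * ε := by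
      refine le_trans (BIPSaux.trajPr_exists_le _ _ hstep0 T (Finset.range T)
        (fun t => BIPSaux.Ebad good T t)) ?_
      have hterm : ∀ t ∈ Finset.range T,
          trajPr (bipsStep G r 2 v) A₀ T (BIPSaux.Ebad good T t) ≤ ε := by
        intro t ht
        exact BIPSaux.trajPr_Ebad_le _ _ good ε hεpos.le hstep0 hstep1 hesc
          (Finset.mem_range.mp ht)
      calc ∑ t ∈ Finset.range T, trajPr (bipsStep G r 2 v) A₀ T (BIPSaux.Ebad good T t)
          ≤ ∑ _t ∈ Finset.range T, ε := Finset.sum_le_sum hterm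
        _ = (T:ℝ) * ε := by rw [Finset.sum_const, Finset.card_range, nsmul_eq_mul]
    have hF : trajPr (bipsStep G r 2 v) A₀ T
        (fun ω => (∀ s, good (ω s)) ∧ ω (Fin.last T) ≠ Finset.univ)
          ≤ γ₀^T * (n'/10) :=
      BIPSaux.trajPr_final_le_Y _ _ good γ₀ (n'/10) hγ₀0 hstep0 hmean hgoodA₀
        (by positivity) T
    have hb1 : (T:ℝ) * ε ≤ (n'^7)⁻¹ := by
      rw [hε_def]
      calc (T:ℝ) * (n'^8)⁻¹ ≤ n' * (n'^8)⁻¹ :=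
            mul_le_mul_of_nonneg_right hTle (by positivity)
        _ = (n'^7)⁻¹ := by
            rw [show n'^8 = n' * n'^7 by ring, mul_inv, ← mul_assoc,
              mul_inv_cancel₀ hn'pos.ne', one_mul]
    have hb2 : γ₀^T * (n'/10) ≤ (n'^6)⁻¹ / 10 := by
      have hg1 : γ₀^T ≤ Real.exp (-((9/10)*(1-lam)))^T :=
        pow_le_pow_left₀ hγ₀0 hγ₀exp T
      have hg2 : Real.exp (-((9/10)*(1-lam)))^T
          = Real.exp ((T:ℝ) * -((9/10)*(1-lam))) := (Real.exp_nat_mul _ T).symm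
      have h8 : 8 * L ≤ (1-lam) * (T:ℝ) := by
        have := (div_le_iff₀ h1mlam).mp hTge
        linarith
      have harg : (T:ℝ) * -((9/10)*(1-lam)) ≤ -(7*L) := by nlinarith [hLpos]
      have hg3 : Real.exp (-(7*L)) = (n'^7)⁻¹ := by
        rw [show (7:ℝ)*L = ((7:ℕ):ℝ)*L by norm_num, Real.exp_neg,
          Real.exp_nat_mul, Real.exp_log hn'pos]
      have hg4 : γ₀^T ≤ (n'^7)⁻¹ := by
        rw [← hg3]
        calc γ₀^T ≤ Real.exp (-((9/10)*(1-lam)))^T := hg1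
          _ = Real.exp ((T:ℝ) * -((9/10)*(1-lam))) := hg2
          _ ≤ Real.exp (-(7*L)) := Real.exp_le_exp.mpr harg
      calc γ₀^T * (n'/10) ≤ (n'^7)⁻¹ * (n'/10) :=
            mul_le_mul_of_nonneg_right hg4 (by positivity)
        _ = (n'^6)⁻¹ / 10 := by
            rw [show n'^7 = n' * n'^6 by ring, mul_inv]
            field_simp
    have hfin : (n'^7)⁻¹ + (n'^6)⁻¹/10 ≤ 1/n'^5 := by
      set u : ℝ := n'⁻¹ with hu_def
      have hupos : 0 < u := by rw [hu_def]; positivity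
      have hu2 : u ≤ 1/2 := by
        rw [hu_def]
        have := inv_anti₀ (by norm_num : (0:ℝ) < 2) hn'2
        simpa using this
      have e7 : (n'^7)⁻¹ = u^7 := by rw [hu_def, inv_pow]
      have e6 : (n'^6)⁻¹ = u^6 := by rw [hu_def, inv_pow]
      have e5 : 1/n'^5 = u^5 := by rw [hu_def, inv_pow, one_div]
      rw [e7, e6, e5]
      have h2 : u^2 ≤ 1/4 := by
        calc u^2 = u * u := sq u
          _ ≤ (1/2) * (1/2) := mul_le_mul hu2 hu2 hupos.le (by norm_num)
          _ = 1/4 := by norm_num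
      have hu5 : 0 < u^5 := pow_pos hupos 5
      have h7 : u^7 ≤ (1/4) * u^5 := by
        calc u^7 = u^2 * u^5 := by ring
          _ ≤ (1/4) * u^5 := mul_le_mul_of_nonneg_right h2 hu5.le
      have h6 : u^6 ≤ (1/2) * u^5 := by
        calc u^6 = u * u^5 := by ring
          _ ≤ (1/2) * u^5 := mul_le_mul_of_nonneg_right hu2 hu5.le
      linarith [h7, h6, hu5]
    linarith [hE, hF, hb1, hb2, hfin]
  have hcompl := BIPSaux.trajPr_add_compl (bipsStep G r 2 v) A₀ hstep1 T
    (fun ω => ∃ s, ω s = Finset.univ)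
  linarith [hcompl, hfail]
end
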